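/- arXiv:1801.05738 — 10 statements merged into one kernel-verified Lean document; each statement's English description precedes it below -/
import Mathlib

section
/- If the probability distribution p = (p_1, …, p_n) has r > 1 nonzero components, then the limit of C_α(p) as α tends to 0 from the right equals ((ln r)/(ln n)) · (ln(n + r) − ln(2n))/(ln(n + 1) − ln(2n)). -/
open Real Filter Topology

/-- Normalized Rényi entropy of a distribution `p` on `Fin n`. -/
noncomputable def renyiH (n : ℕ) (p : Fin n → ℝ) (α : ℝ) : ℝ :=
  (1 / ((1 - α) * Real.log n)) * Real.log (∑ i, p i ^ α)

/-- Jensen–Rényi divergence of `p` from the uniform distribution on `Fin n`. -/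
noncomputable def renyiD (n : ℕ) (p : Fin n → ℝ) (α : ℝ) : ℝ :=
  (1 / (2 * (α - 1))) *
    (Real.log (∑ i, p i ^ α * ((p i + 1 / (n : ℝ)) / 2) ^ (1 - α)) +
     Real.log (∑ i, (n : ℝ) ^ (-α) * ((p i + 1 / (n : ℝ)) / 2) ^ (1 - α)))

/-- Normalization constant `D_α^*`. -/
noncomputable def renyiDstar (n : ℕ) (α : ℝ) : ℝ :=
  (1 / (2 * (α - 1))) *
    Real.log (((((n : ℝ) + 1) ^ (1 - α) + (n : ℝ) - 1) / (n : ℝ)) *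
      (((n : ℝ) + 1) / (4 * (n : ℝ))) ^ (1 - α))

/-- Rényi statistical complexity. -/
noncomputable def renyiC (n : ℕ) (p : Fin n → ℝ) (α : ℝ) : ℝ :=
  renyiD n p α * renyiH n p α / renyiDstar n α

section aux

private lemma aux_rpow_tendsto {b : ℝ} (hb : 0 < b) :
    Filter.Tendsto (fun α : ℝ => b ^ α) (nhds 0) (nhds 1) := by
  have := (Real.continuousAt_const_rpow (a := b) (b := (0:ℝ)) hb.ne').tendsto
  simpa [Real.rpow_zero] using this

private lemma aux_rpow_tendsto1 {b : ℝ} (hb : 0 < b) :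
    Filter.Tendsto (fun α : ℝ => b ^ (1 - α)) (nhds 0) (nhds b) := by
  have h1 : Filter.Tendsto (fun α : ℝ => 1 - α) (nhds (0:ℝ)) (nhds 1) := by
    simpa using ((by fun_prop : Continuous fun α : ℝ => 1 - α).tendsto (0:ℝ))
  have := (Real.continuousAt_const_rpow (a := b) (b := (1:ℝ)) hb.ne').tendsto.comp h1
  simpa [Real.rpow_one, Function.comp_def] using this

private lemma aux_rpow_tendsto_neg {b : ℝ} (hb : 0 < b) :
    Filter.Tendsto (fun α : ℝ => b ^ (-α)) (nhds 0) (nhds 1) := by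
  have h1 : Filter.Tendsto (fun α : ℝ => -α) (nhds (0:ℝ)) (nhds 0) := by
    simpa using (continuous_neg.tendsto (0:ℝ))
  have := (Real.continuousAt_const_rpow (a := b) (b := (0:ℝ)) hb.ne').tendsto.comp h1
  simpa [Real.rpow_zero, Function.comp_def] using this

end aux

/-- If `p` has `r > 1` nonzero components, then as `α → 0⁺`,
`C_α(p) → (ln r / ln n) * (ln(n+r) - ln(2n)) / (ln(n+1) - ln(2n))`. -/
theorem renyi_complexity_limit_zero (n : ℕ) (hn : 2 ≤ n) (p : Fin n → ℝ)
    (hp : ∀ i, 0 ≤ p i) (hsum : ∑ i, p i = 1)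
    (hr : 1 < (Finset.univ.filter fun i => p i ≠ 0).card) :
    Filter.Tendsto (fun α => renyiC n p α) (nhdsWithin 0 (Set.Ioi 0))
      (nhds ((Real.log ((Finset.univ.filter fun i => p i ≠ 0).card : ℝ) / Real.log n) *
        ((Real.log ((n : ℝ) + ((Finset.univ.filter fun i => p i ≠ 0).card : ℝ)) -
            Real.log (2 * (n : ℝ))) /
          (Real.log ((n : ℝ) + 1) - Real.log (2 * (n : ℝ)))))) := by
  classical
  set S := (Finset.univ.filter fun i => p i ≠ 0) with hSdef
  have hnR : (1:ℝ) < n := by exact_mod_cast lt_of_lt_of_le one_lt_two hn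
  have hn0 : (0:ℝ) < n := lt_trans one_pos hnR
  have hlogn : Real.log n ≠ 0 := ne_of_gt (Real.log_pos hnR)
  have hq : ∀ i, 0 < (p i + 1/(n:ℝ))/2 := by
    intro i
    have := hp i
    positivity
  have hpS : ∀ i ∈ S, 0 < p i := by
    intro i hi
    have h0 : p i ≠ 0 := (Finset.mem_filter.mp hi).2
    exact lt_of_le_of_ne (hp i) (Ne.symm h0)
  have hr1 : (1:ℝ) < (S.card : ℝ) := by exact_mod_cast hr
  have hr0 : (0:ℝ) < (S.card : ℝ) := lt_trans one_pos hr1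
  have hsumS : ∑ i ∈ S, p i = 1 := by
    rw [hSdef, Finset.sum_filter_ne_zero]; exact hsum
  -- the second factor of D⋆ and D denominators
  have hBpos : (0:ℝ) < ((n:ℝ) + S.card) / (2*n) := by positivity
  have hB1pos : (0:ℝ) < ((n:ℝ) + 1) / (2*n) := by positivity
  -- entropy sum
  have hA : Filter.Tendsto (fun α : ℝ => ∑ i, p i ^ α) (nhdsWithin 0 (Set.Ioi 0))
      (nhds (S.card : ℝ)) := by
    have h1 : Filter.Tendsto (fun α : ℝ => ∑ i ∈ S, p i ^ α) (nhds 0)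
        (nhds (S.card : ℝ)) := by
      have := tendsto_finset_sum S (fun i hi => aux_rpow_tendsto (hpS i hi))
      simpa using this
    refine Filter.Tendsto.congr' ?_ (h1.mono_left nhdsWithin_le_nhds)
    filter_upwards [self_mem_nhdsWithin] with α hα
    refine Finset.sum_subset (Finset.subset_univ S) ?_
    intro i _ hiS
    have hpi : p i = 0 := by
      by_contra h
      exact hiS (Finset.mem_filter.mpr ⟨Finset.mem_univ i, h⟩)
    rw [hpi, Real.zero_rpow (ne_of_gt (Set.mem_Ioi.mp hα))]
  -- first divergence sum
  have hBval : ∑ i ∈ S, (p i + 1/(n:ℝ))/2 = ((n:ℝ) + S.card) / (2*n) := by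
    rw [← Finset.sum_div, Finset.sum_add_distrib, hsumS, Finset.sum_const, nsmul_eq_mul]
    rw [div_eq_div_iff (by norm_num : (2:ℝ) ≠ 0) (by positivity : (2 * (n:ℝ)) ≠ 0)]
    field_simp
  have hB : Filter.Tendsto (fun α : ℝ => ∑ i, p i ^ α * ((p i + 1/(n:ℝ))/2) ^ (1-α))
      (nhdsWithin 0 (Set.Ioi 0)) (nhds (((n:ℝ) + S.card) / (2*n))) := by
    rw [← hBval]
    have h1 : Filter.Tendsto (fun α : ℝ => ∑ i ∈ S, p i ^ α * ((p i + 1/(n:ℝ))/2) ^ (1-α))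
        (nhds 0) (nhds (∑ i ∈ S, (p i + 1/(n:ℝ))/2)) := by
      refine tendsto_finset_sum S fun i hi => ?_
      simpa using (aux_rpow_tendsto (hpS i hi)).mul (aux_rpow_tendsto1 (hq i))
    refine Filter.Tendsto.congr' ?_ (h1.mono_left nhdsWithin_le_nhds)
    filter_upwards [self_mem_nhdsWithin] with α hα
    refine Finset.sum_subset (Finset.subset_univ S) ?_
    intro i _ hiS
    have hpi : p i = 0 := by
      by_contra h
      exact hiS (Finset.mem_filter.mpr ⟨Finset.mem_univ i, h⟩)
    rw [hpi, Real.zero_rpow (ne_of_gt (Set.mem_Ioi.mp hα)), zero_mul]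
  -- second divergence sum
  have hCval : ∑ i : Fin n, (p i + 1/(n:ℝ))/2 = 1 := by
    rw [← Finset.sum_div, Finset.sum_add_distrib, hsum, Finset.sum_const, nsmul_eq_mul]
    simp only [Finset.card_univ, Fintype.card_fin]
    field_simp
    norm_num
  have hC : Filter.Tendsto (fun α : ℝ => ∑ i, (n:ℝ) ^ (-α) * ((p i + 1/(n:ℝ))/2) ^ (1-α))
      (nhdsWithin 0 (Set.Ioi 0)) (nhds 1) := by
    have h1 : Filter.Tendsto (fun α : ℝ => ∑ i, (n:ℝ) ^ (-α) * ((p i + 1/(n:ℝ))/2) ^ (1-α))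
        (nhds 0) (nhds (∑ i : Fin n, (p i + 1/(n:ℝ))/2)) := by
      refine tendsto_finset_sum _ fun i _ => ?_
      simpa using (aux_rpow_tendsto_neg hn0).mul (aux_rpow_tendsto1 (hq i))
    rw [hCval] at h1
    exact h1.mono_left nhdsWithin_le_nhds
  -- prefactors
  have hpre1 : Filter.Tendsto (fun α : ℝ => 1/((1-α) * Real.log n))
      (nhdsWithin 0 (Set.Ioi 0)) (nhds (1 / Real.log n)) := by
    have hcont : Continuous fun α : ℝ => (1 - α) * Real.log n :=
      (continuous_const.sub continuous_id).mul continuous_const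
    have hden : Filter.Tendsto (fun α : ℝ => (1-α) * Real.log n) (nhds 0)
        (nhds (Real.log n)) := by
      simpa using hcont.tendsto (0:ℝ)
    exact ((tendsto_const_nhds (x := (1:ℝ))).div hden hlogn).mono_left nhdsWithin_le_nhds
  have hpre2 : Filter.Tendsto (fun α : ℝ => 1/(2 * (α - 1)))
      (nhdsWithin 0 (Set.Ioi 0)) (nhds (-(1/2))) := by
    have hcont : Continuous fun α : ℝ => 2 * (α - 1) :=
      continuous_const.mul (continuous_id.sub continuous_const)
    have hden : Filter.Tendsto (fun α : ℝ => 2 * (α - 1)) (nhds (0:ℝ)) (nhds (-2)) := by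
      have := hcont.tendsto (0:ℝ)
      norm_num at this
      exact this
    have := (tendsto_const_nhds (x := (1:ℝ))).div hden (by norm_num : (-2:ℝ) ≠ 0)
    have h2 : (1:ℝ) / (-2) = -(1/2) := by norm_num
    rw [h2] at this
    exact this.mono_left nhdsWithin_le_nhds
  -- entropy limit
  have hH : Filter.Tendsto (fun α => renyiH n p α) (nhdsWithin 0 (Set.Ioi 0))
      (nhds ((1 / Real.log n) * Real.log (S.card : ℝ))) := by
    have hlog : Filter.Tendsto (fun α : ℝ => Real.log (∑ i, p i ^ α))
        (nhdsWithin 0 (Set.Ioi 0)) (nhds (Real.log (S.card : ℝ))) :=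
      (Real.continuousAt_log hr0.ne').tendsto.comp hA
    exact hpre1.mul hlog
  -- divergence limit
  have hD : Filter.Tendsto (fun α => renyiD n p α) (nhdsWithin 0 (Set.Ioi 0))
      (nhds (-(1/2) * Real.log (((n:ℝ) + S.card) / (2*n)))) := by
    have hlogB : Filter.Tendsto
        (fun α : ℝ => Real.log (∑ i, p i ^ α * ((p i + 1/(n:ℝ))/2) ^ (1-α)))
        (nhdsWithin 0 (Set.Ioi 0)) (nhds (Real.log (((n:ℝ) + S.card) / (2*n)))) :=
      (Real.continuousAt_log hBpos.ne').tendsto.comp hB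
    have hlogC : Filter.Tendsto
        (fun α : ℝ => Real.log (∑ i, (n:ℝ) ^ (-α) * ((p i + 1/(n:ℝ))/2) ^ (1-α)))
        (nhdsWithin 0 (Set.Ioi 0)) (nhds (Real.log 1)) :=
      (Real.continuousAt_log one_ne_zero).tendsto.comp hC
    have h := hpre2.mul (hlogB.add hlogC)
    simpa [Real.log_one, renyiD] using h
  -- D⋆ limit
  have hDstar : Filter.Tendsto (fun α => renyiDstar n α) (nhdsWithin 0 (Set.Ioi 0))
      (nhds (-(1/2) * Real.log (((n:ℝ) + 1) / (2*n)))) := by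
    have harg : Filter.Tendsto
        (fun α : ℝ => ((((n:ℝ) + 1) ^ (1-α) + (n:ℝ) - 1) / (n:ℝ)) *
          (((n:ℝ) + 1) / (4 * (n:ℝ))) ^ (1-α))
        (nhds 0) (nhds ((((n:ℝ) + 1 + (n:ℝ) - 1) / (n:ℝ)) *
          (((n:ℝ) + 1) / (4 * (n:ℝ))))) := by
      have h1 : (0:ℝ) < (n:ℝ) + 1 := by positivity
      have h2 : (0:ℝ) < ((n:ℝ) + 1) / (4 * (n:ℝ)) := by positivity
      exact ((((aux_rpow_tendsto1 h1).add tendsto_const_nhds).sub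
        tendsto_const_nhds).div tendsto_const_nhds hn0.ne').mul (aux_rpow_tendsto1 h2)
    have hval : (((n:ℝ) + 1 + (n:ℝ) - 1) / (n:ℝ)) * (((n:ℝ) + 1) / (4 * (n:ℝ)))
        = ((n:ℝ) + 1) / (2*n) := by
      field_simp
      ring
    rw [hval] at harg
    have hlog : Filter.Tendsto
        (fun α : ℝ => Real.log (((((n:ℝ) + 1) ^ (1-α) + (n:ℝ) - 1) / (n:ℝ)) *
          (((n:ℝ) + 1) / (4 * (n:ℝ))) ^ (1-α)))
        (nhds 0) (nhds (Real.log (((n:ℝ) + 1) / (2*n)))) :=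
      (Real.continuousAt_log hB1pos.ne').tendsto.comp harg
    have h := hpre2.mul (hlog.mono_left nhdsWithin_le_nhds)
    simpa [renyiDstar] using h
  -- denominator of the final division is nonzero
  have h2n : (0:ℝ) < 2 * n := by positivity
  have hlt : ((n:ℝ) + 1) < 2 * n := by
    have : (2:ℝ) ≤ n := by exact_mod_cast hn
    linarith
  have hlogdiff : Real.log ((n:ℝ) + 1) - Real.log (2 * n) ≠ 0 := by
    have := Real.log_lt_log (by positivity : (0:ℝ) < (n:ℝ) + 1) hlt
    linarith
  have hden_ne : -(1/2) * Real.log (((n:ℝ) + 1) / (2*n)) ≠ 0 := by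
    rw [Real.log_div (by positivity) h2n.ne']
    intro h
    apply hlogdiff
    have : Real.log ((n:ℝ) + 1) - Real.log (2 * n) = 0 := by
      by_contra h'
      exact h' (by linarith [mul_eq_zero.mp h])
    exact this
  -- combine
  have hfinal := (hD.mul hH).div hDstar hden_ne
  have hkey : -(1/2) * Real.log (((n:ℝ) + S.card) / (2*n)) *
      ((1 / Real.log n) * Real.log (S.card : ℝ)) /
      (-(1/2) * Real.log (((n:ℝ) + 1) / (2*n))) =
      (Real.log (S.card : ℝ) / Real.log n) *
        ((Real.log ((n:ℝ) + (S.card : ℝ)) - Real.log (2 * (n:ℝ))) /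
          (Real.log ((n:ℝ) + 1) - Real.log (2 * (n:ℝ)))) := by
    rw [Real.log_div (by positivity) h2n.ne', Real.log_div (by positivity) h2n.ne']
    rw [mul_assoc, mul_div_mul_left _ _ (by norm_num : (-(1/2):ℝ) ≠ 0)]
    rw [one_div_mul_eq_div, ← mul_div_assoc, div_div, div_mul_div_comm,
      mul_comm (Real.log ((n:ℝ) + (S.card : ℝ)) - Real.log (2 * (n:ℝ)))
        (Real.log (S.card : ℝ))]
  rw [hkey] at hfinal
  exact hfinal
end

section
/- If the probability distribution p = (p_1, …, p_n) has r > 1 nonzero components, with maximum component p_M and minimum component p_m, then the limit of C_α(p) as α → ∞ equals ((ln((n p_M + 1)(n p_m + 1)) − ln(4 n p_M))/(ln(4n) − ln(n + 1))) · ((ln p_M)/(ln n)). -/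
open Real Filter Topology

lemma aux_ratio_one : Tendsto (fun α : ℝ => α / (α - 1)) atTop (nhds 1) := by
  have h : Tendsto (fun α : ℝ => 1 + (α - 1)⁻¹) atTop (nhds (1 + 0)) :=
    tendsto_const_nhds.add ((tendsto_atTop_add_const_right _ (-1) tendsto_id).inv_tendsto_atTop)
  rw [add_zero] at h
  refine h.congr' ?_
  filter_upwards [eventually_gt_atTop (1:ℝ)] with α hα
  have : α - 1 ≠ 0 := by linarith
  field_simp
  ring

lemma aux_ratio_negone : Tendsto (fun α : ℝ => α / (1 - α)) atTop (nhds (-1)) := by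
  have h : Tendsto (fun α : ℝ => -1 + -((α - 1)⁻¹)) atTop (nhds (-1 + -0)) := by
    refine tendsto_const_nhds.add ?_
    exact ((tendsto_atTop_add_const_right _ (-1) tendsto_id).inv_tendsto_atTop).neg
  rw [neg_zero, add_zero] at h
  refine h.congr' ?_
  filter_upwards [eventually_gt_atTop (1:ℝ)] with α hα
  have h1 : 1 - α ≠ 0 := by linarith
  have h2 : α - 1 ≠ 0 := by linarith
  field_simp
  ring

lemma log_sum_rpow_div_tendsto {n : ℕ} (c a : Fin n → ℝ) (hc : ∀ i, 0 ≤ c i)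
    (ha : ∀ i, 0 ≤ a i) (i0 : Fin n) (hc0 : 0 < c i0) (hmax : ∀ i, a i ≤ a i0)
    (ha0 : 0 < a i0) :
    Tendsto (fun α : ℝ => Real.log (∑ i, c i * a i ^ α) / α) atTop
      (nhds (Real.log (a i0))) := by
  have hlow : Tendsto (fun α : ℝ => Real.log (c i0) / α + Real.log (a i0)) atTop
      (nhds (0 + Real.log (a i0))) :=
    (tendsto_const_nhds.div_atTop tendsto_id).add tendsto_const_nhds
  have hup : Tendsto (fun α : ℝ => Real.log (∑ i, c i) / α + Real.log (a i0)) atTop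
      (nhds (0 + Real.log (a i0))) :=
    (tendsto_const_nhds.div_atTop tendsto_id).add tendsto_const_nhds
  rw [zero_add] at hlow hup
  refine tendsto_of_tendsto_of_tendsto_of_le_of_le' hlow hup ?_ ?_
  · filter_upwards [eventually_gt_atTop (0:ℝ)] with α hα
    have hterm : c i0 * a i0 ^ α ≤ ∑ i, c i * a i ^ α := by
      exact Finset.single_le_sum (f := fun i => c i * a i ^ α)
        (fun i _ => mul_nonneg (hc i) (Real.rpow_nonneg (ha i) α)) (Finset.mem_univ i0)
    have hpos : (0:ℝ) < c i0 * a i0 ^ α :=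
      mul_pos hc0 (Real.rpow_pos_of_pos ha0 α)
    have hlog : Real.log (c i0 * a i0 ^ α) ≤ Real.log (∑ i, c i * a i ^ α) :=
      Real.log_le_log hpos hterm
    rw [Real.log_mul (ne_of_gt hc0) (ne_of_gt (Real.rpow_pos_of_pos ha0 α)),
      Real.log_rpow ha0] at hlog
    rw [div_add' _ _ _ (ne_of_gt hα), div_le_div_iff₀ hα hα]
    nlinarith
  · filter_upwards [eventually_gt_atTop (0:ℝ)] with α hα
    have hterm : ∑ i, c i * a i ^ α ≤ (∑ i, c i) * a i0 ^ α := by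
      rw [Finset.sum_mul]
      refine Finset.sum_le_sum fun i _ => ?_
      exact mul_le_mul_of_nonneg_left
        (Real.rpow_le_rpow (ha i) (hmax i) (le_of_lt hα)) (hc i)
    have hpos : (0:ℝ) < c i0 * a i0 ^ α :=
      mul_pos hc0 (Real.rpow_pos_of_pos ha0 α)
    have hpos2 : (0:ℝ) < ∑ i, c i * a i ^ α := by
      refine lt_of_lt_of_le hpos ?_
      exact Finset.single_le_sum (f := fun i => c i * a i ^ α)
        (fun i _ => mul_nonneg (hc i) (Real.rpow_nonneg (ha i) α)) (Finset.mem_univ i0)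
    have hlog : Real.log (∑ i, c i * a i ^ α) ≤ Real.log ((∑ i, c i) * a i0 ^ α) :=
      Real.log_le_log hpos2 hterm
    have hcsum : (0:ℝ) < ∑ i, c i := by
      refine lt_of_lt_of_le hc0 ?_
      exact Finset.single_le_sum (f := c) (fun i _ => hc i) (Finset.mem_univ i0)
    rw [Real.log_mul (ne_of_gt hcsum) (ne_of_gt (Real.rpow_pos_of_pos ha0 α)),
      Real.log_rpow ha0] at hlog
    rw [div_add' _ _ _ (ne_of_gt hα), div_le_div_iff₀ hα hα]
    nlinarith


/-- If `p` has `r > 1` nonzero components, with maximum `pM` and minimum `pm`, then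
as `α → ∞`,
`C_α(p) → ((ln((n pM + 1)(n pm + 1)) - ln(4 n pM)) / (ln(4n) - ln(n+1))) * (ln pM / ln n)`. -/
theorem renyi_complexity_limit_infty (n : ℕ) (hn : 2 ≤ n) (p : Fin n → ℝ)
    (hp : ∀ i, 0 ≤ p i) (hsum : ∑ i, p i = 1)
    (hr : 1 < (Finset.univ.filter fun i => p i ≠ 0).card)
    (pM pm : ℝ) (hpM_mem : ∃ i, p i = pM) (hpM_ub : ∀ i, p i ≤ pM)
    (hpm_mem : ∃ i, p i = pm) (hpm_lb : ∀ i, pm ≤ p i) :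
    Filter.Tendsto (fun α => renyiC n p α) Filter.atTop
      (nhds (((Real.log (((n : ℝ) * pM + 1) * ((n : ℝ) * pm + 1)) -
          Real.log (4 * (n : ℝ) * pM)) /
        (Real.log (4 * (n : ℝ)) - Real.log ((n : ℝ) + 1))) *
        (Real.log pM / Real.log n))) := by
  obtain ⟨iM, hiM⟩ := hpM_mem
  obtain ⟨im, him⟩ := hpm_mem
  have hnR : (2:ℝ) ≤ (n:ℝ) := by exact_mod_cast hn
  have hn0 : (0:ℝ) < n := by linarith
  -- pM > 0
  have hpM0 : 0 < pM := by
    have hne : (Finset.univ.filter fun i => p i ≠ 0).Nonempty :=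
      Finset.card_pos.mp (by omega)
    obtain ⟨j, hj⟩ := hne
    have hj' : p j ≠ 0 := (Finset.mem_filter.mp hj).2
    have : 0 < p j := lt_of_le_of_ne (hp j) (Ne.symm hj')
    linarith [hpM_ub j]
  have hpm0 : 0 ≤ pm := him ▸ hp im
  set q : Fin n → ℝ := fun i => (p i + 1 / (n:ℝ)) / 2 with hqdef
  have hq0 : ∀ i, 0 < q i := fun i => by
    have := hp i
    have : (0:ℝ) < 1 / (n:ℝ) := by positivity
    simp only [hqdef]
    positivity
  have hlogn : Real.log n ≠ 0 := by
    have : (1:ℝ) < n := by linarith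
    exact ne_of_gt (Real.log_pos this)
  -- t1
  have ht1 : Tendsto (fun α : ℝ => Real.log (∑ i, (1:ℝ) * p i ^ α) / α) atTop
      (nhds (Real.log pM)) := by
    have := log_sum_rpow_div_tendsto (fun _ => 1) p (fun _ => zero_le_one) hp iM
      one_pos (fun i => hiM ▸ hpM_ub i) (hiM ▸ hpM0)
    rwa [hiM] at this
  -- t2
  have ht2 : Tendsto (fun α : ℝ => Real.log (∑ i, q i * (p i / q i) ^ α) / α) atTop
      (nhds (Real.log (p iM / q iM))) := by
    refine log_sum_rpow_div_tendsto q (fun i => p i / q i)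
      (fun i => (hq0 i).le) (fun i => div_nonneg (hp i) (hq0 i).le) iM (hq0 iM) ?_ ?_
    · intro i
      rw [div_le_div_iff₀ (hq0 i) (hq0 iM)]
      have h1 : p i ≤ p iM := by rw [hiM]; exact hpM_ub i
      have h2 : (0:ℝ) < 1 / (n:ℝ) := by positivity
      simp only [hqdef]
      nlinarith [hp i, hp iM]
    · exact div_pos (hiM ▸ hpM0) (hq0 iM)
  -- t3
  have ht3 : Tendsto (fun α : ℝ => Real.log (∑ i, q i * (((n:ℝ) * q i)⁻¹) ^ α) / α) atTop
      (nhds (Real.log (((n:ℝ) * q im)⁻¹))) := by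
    refine log_sum_rpow_div_tendsto q (fun i => ((n:ℝ) * q i)⁻¹)
      (fun i => (hq0 i).le) (fun i => (inv_pos.mpr (mul_pos hn0 (hq0 i))).le) im (hq0 im) ?_ ?_
    · intro i
      have hqle : q im ≤ q i := by
        simp only [hqdef]
        have := him ▸ hpm_lb i
        linarith
      exact inv_anti₀ (mul_pos hn0 (hq0 im)) (by nlinarith)
    · exact inv_pos.mpr (mul_pos hn0 (hq0 im))
  -- H limit
  have hH : Tendsto (fun α => renyiH n p α) atTop
      (nhds ((-1) * ((Real.log n)⁻¹ * Real.log pM))) := by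
    refine (aux_ratio_negone.mul (ht1.const_mul (Real.log n)⁻¹)).congr' ?_
    filter_upwards [eventually_gt_atTop (1:ℝ)] with α hα
    have hα0 : α ≠ 0 := by linarith
    have hα1 : 1 - α ≠ 0 := by linarith
    simp only [renyiH, one_mul]
    field_simp
  -- D limit
  have hD : Tendsto (fun α => renyiD n p α) atTop
      (nhds (1 * ((2:ℝ)⁻¹ * (Real.log (p iM / q iM) + Real.log (((n:ℝ) * q im)⁻¹))))) := by
    refine (aux_ratio_one.mul ((ht2.add ht3).const_mul (2:ℝ)⁻¹)).congr' ?_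
    filter_upwards [eventually_gt_atTop (1:ℝ)] with α hα
    have hα0 : α ≠ 0 := by linarith
    have hα1 : α - 1 ≠ 0 := by linarith
    have hs2 : (∑ i, p i ^ α * ((p i + 1 / (n:ℝ)) / 2) ^ (1 - α))
        = ∑ i, q i * (p i / q i) ^ α := by
      refine Finset.sum_congr rfl fun i _ => ?_
      have hqi := hq0 i
      have hqa : q i ^ α ≠ 0 := (Real.rpow_pos_of_pos hqi α).ne'
      rw [Real.div_rpow (hp i) hqi.le, show ((p i + 1 / (n:ℝ)) / 2) = q i from rfl,
        Real.rpow_sub hqi, Real.rpow_one]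
      field_simp
    have hs3 : (∑ i, (n:ℝ) ^ (-α) * ((p i + 1 / (n:ℝ)) / 2) ^ (1 - α))
        = ∑ i, q i * (((n:ℝ) * q i)⁻¹) ^ α := by
      refine Finset.sum_congr rfl fun i _ => ?_
      have hqi := hq0 i
      have hqa : q i ^ α ≠ 0 := (Real.rpow_pos_of_pos hqi α).ne'
      have hna : (n:ℝ) ^ α ≠ 0 := (Real.rpow_pos_of_pos hn0 α).ne'
      rw [Real.inv_rpow (mul_pos hn0 hqi).le, Real.mul_rpow hn0.le hqi.le,
        show ((p i + 1 / (n:ℝ)) / 2) = q i from rfl,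
        Real.rpow_sub hqi, Real.rpow_one, Real.rpow_neg hn0.le]
      field_simp
    simp only [renyiD, hs2, hs3]
    field_simp
    ring_nf
    simp only [mul_comm]
  -- D* limit
  have hrpow : Tendsto (fun α : ℝ => ((n:ℝ) + 1) ^ (1 - α)) atTop (nhds 0) := by
    have hb : (0:ℝ) < (n:ℝ) + 1 := by linarith
    have hlb : 0 < Real.log ((n:ℝ) + 1) := Real.log_pos (by linarith)
    have h1 : Tendsto (fun α : ℝ => 1 - α) atTop atBot := by
      have := (tendsto_neg_atTop_atBot (G := ℝ)).comp
        (tendsto_atTop_add_const_right atTop (-1 : ℝ) tendsto_id)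
      refine this.congr fun α => by simp [Function.comp]; ring
    have h2 : Tendsto (fun α : ℝ => Real.log ((n:ℝ) + 1) * (1 - α)) atTop atBot :=
      h1.const_mul_atBot hlb
    have h3 := Real.tendsto_exp_atBot.comp h2
    refine h3.congr fun α => ?_
    simp only [Function.comp]
    rw [Real.rpow_def_of_pos hb]
  have hBlim : Tendsto (fun α : ℝ => Real.log ((((n:ℝ) + 1) ^ (1 - α) + (n:ℝ) - 1) / (n:ℝ)))
      atTop (nhds (Real.log ((0 + (n:ℝ) - 1) / (n:ℝ)))) := by
    have hinner : Tendsto (fun α : ℝ => (((n:ℝ) + 1) ^ (1 - α) + (n:ℝ) - 1) / (n:ℝ))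
        atTop (nhds ((0 + (n:ℝ) - 1) / (n:ℝ))) :=
      (((hrpow.add tendsto_const_nhds).sub tendsto_const_nhds).div_const _)
    exact hinner.log (by simp only [zero_add]; exact ne_of_gt (div_pos (by linarith) hn0))
  have hcoef : Tendsto (fun α : ℝ => 1 / (2 * (α - 1))) atTop (nhds 0) := by
    refine tendsto_const_nhds.div_atTop ?_
    exact (tendsto_atTop_add_const_right atTop (-1 : ℝ) tendsto_id).const_mul_atTop two_pos
  have hDstar : Tendsto (fun α => renyiDstar n α) atTop
      (nhds (0 * Real.log ((0 + (n:ℝ) - 1) / (n:ℝ)) - Real.log (((n:ℝ) + 1) / (4 * (n:ℝ))) / 2)) := by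
    refine ((hcoef.mul hBlim).sub tendsto_const_nhds).congr' ?_
    filter_upwards [eventually_gt_atTop (1:ℝ)] with α hα
    have hα1 : α - 1 ≠ 0 := by linarith
    have hBpos : (0:ℝ) < (((n:ℝ) + 1) ^ (1 - α) + (n:ℝ) - 1) / (n:ℝ) := by
      have := Real.rpow_pos_of_pos (show (0:ℝ) < (n:ℝ) + 1 by linarith) (1 - α)
      have h2 : (0:ℝ) < ((n:ℝ) + 1) ^ (1 - α) + (n:ℝ) - 1 := by linarith
      positivity
    have hrpos : (0:ℝ) < ((n:ℝ) + 1) / (4 * (n:ℝ)) := by positivity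
    simp only [renyiDstar]
    rw [Real.log_mul hBpos.ne' (Real.rpow_pos_of_pos hrpos _).ne', Real.log_rpow hrpos]
    field_simp
    ring
  have hDstarNe : (0 * Real.log ((0 + (n:ℝ) - 1) / (n:ℝ))
      - Real.log (((n:ℝ) + 1) / (4 * (n:ℝ))) / 2) ≠ 0 := by
    rw [zero_mul, zero_sub]
    have hlt : Real.log (((n:ℝ) + 1) / (4 * (n:ℝ))) < 0 := by
      refine Real.log_neg (by positivity) ?_
      rw [div_lt_one (by positivity)]
      linarith
    intro h
    have : Real.log (((n:ℝ) + 1) / (4 * (n:ℝ))) = 0 := by linarith [neg_eq_zero.mp (by linarith : -(Real.log (((n:ℝ) + 1) / (4 * (n:ℝ))) / 2) = 0)]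
    linarith
  have hC := (hD.mul hH).div hDstar hDstarNe
  have hCeq : (fun α => renyiC n p α)
      = fun α => renyiD n p α * renyiH n p α / renyiDstar n α := rfl
  rw [hCeq]
  convert hC using 2
  · rfl
  -- value equality
  have hqM : q iM = ((n:ℝ) * pM + 1) / (2 * (n:ℝ)) := by
    simp only [hqdef, hiM]
    field_simp
  have hqm : (n:ℝ) * q im = ((n:ℝ) * pm + 1) / 2 := by
    simp only [hqdef, him]
    field_simp
  have hApos : (0:ℝ) < (n:ℝ) * pM + 1 := by nlinarith
  have hBpos : (0:ℝ) < (n:ℝ) * pm + 1 := by nlinarith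
  have e1 : Real.log (((n:ℝ) * pM + 1) * ((n:ℝ) * pm + 1))
      = Real.log ((n:ℝ) * pM + 1) + Real.log ((n:ℝ) * pm + 1) :=
    Real.log_mul hApos.ne' hBpos.ne'
  have e2 : Real.log (4 * (n:ℝ) * pM) = Real.log (4 * (n:ℝ)) + Real.log pM :=
    Real.log_mul (by positivity) hpM0.ne'
  have e3 : Real.log (4 * (n:ℝ)) = 2 * Real.log 2 + Real.log n := by
    rw [show (4:ℝ) * n = 2 ^ 2 * n by norm_num, Real.log_mul (by norm_num) hn0.ne',
      Real.log_pow]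
    push_cast
    ring
  have e4 : Real.log (p iM / q iM)
      = Real.log pM - (Real.log ((n:ℝ) * pM + 1) - (Real.log 2 + Real.log n)) := by
    rw [hiM, hqM, Real.log_div hpM0.ne' (by positivity),
      Real.log_div hApos.ne' (by positivity), Real.log_mul (by norm_num) hn0.ne']
  have e5 : Real.log (((n:ℝ) * q im)⁻¹)
      = -(Real.log ((n:ℝ) * pm + 1) - Real.log 2) := by
    rw [hqm, Real.log_inv, Real.log_div hBpos.ne' (by norm_num)]
  have e6 : Real.log (((n:ℝ) + 1) / (4 * (n:ℝ)))
      = Real.log ((n:ℝ) + 1) - (2 * Real.log 2 + Real.log n) := by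
    rw [Real.log_div (by positivity) (by positivity), e3]
  have hden : Real.log (4 * (n:ℝ)) - Real.log ((n:ℝ) + 1) ≠ 0 := by
    have : Real.log ((n:ℝ) + 1) < Real.log (4 * (n:ℝ)) :=
      Real.log_lt_log (by positivity) (by linarith)
    linarith
  rw [e3] at hden
  rw [e1, e2, e3, e4, e5, e6]
  rw [zero_mul, zero_sub]
  have hden' : Real.log ((n:ℝ) + 1) - (2 * Real.log 2 + Real.log n) ≠ 0 := fun h => hden (by linarith)
  field_simp
  ring
end

section
/- If the probability distribution p = (p_1, …, p_n) has r ≥ 1 nonzero components with maximum component p_M, then for every α > 1 one has (α/(1 − α)) · (ln p_M)/(ln n) ≥ H_α(p) ≥ (α/(1 − α)) · (ln p_M)/(ln n) + (ln r)/((1 − α) ln n). -/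
open Real Filter Topology

/-- For `α > 1`, `(α/(1-α)) (ln pM / ln n) ≥ H_α(p) ≥ (α/(1-α)) (ln pM / ln n) + ln r/((1-α) ln n)`. -/
theorem renyi_entropy_bounds (n : ℕ) (hn : 2 ≤ n) (p : Fin n → ℝ)
    (hp : ∀ i, 0 ≤ p i) (hsum : ∑ i, p i = 1)
    (hr : 1 ≤ (Finset.univ.filter fun i => p i ≠ 0).card)
    (pM : ℝ) (hpM_mem : ∃ i, p i = pM) (hpM_ub : ∀ i, p i ≤ pM) :
    ∀ α : ℝ, 1 < α →
      (α / (1 - α)) * (Real.log pM / Real.log n) ≥ renyiH n p α ∧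
      renyiH n p α ≥ (α / (1 - α)) * (Real.log pM / Real.log n) +
        Real.log ((Finset.univ.filter fun i => p i ≠ 0).card : ℝ) / ((1 - α) * Real.log n) := by
  intro α hα
  have hn1 : (1 : ℝ) < (n : ℝ) := by exact_mod_cast lt_of_lt_of_le one_lt_two hn
  have hlogn : 0 < Real.log n := Real.log_pos hn1
  have h1α : 1 - α < 0 := by linarith
  have hcneg : 1 / ((1 - α) * Real.log n) < 0 :=
    one_div_neg.mpr (mul_neg_of_neg_of_pos h1α hlogn)
  set c : ℝ := 1 / ((1 - α) * Real.log n) with hc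
  -- pM > 0
  obtain ⟨i0, hi0⟩ := Finset.card_pos.mp (lt_of_lt_of_le one_pos hr)
  have hi0' : p i0 ≠ 0 := (Finset.mem_filter.mp hi0).2
  have hpM_pos : 0 < pM := lt_of_lt_of_le (lt_of_le_of_ne (hp i0) (Ne.symm hi0')) (hpM_ub i0)
  set r : ℕ := (Finset.univ.filter fun i => p i ≠ 0).card with hrdef
  have hα0 : (0 : ℝ) < α := by linarith
  -- lower bound on the sum
  obtain ⟨j, hj⟩ := hpM_mem
  have hS_lb : pM ^ α ≤ ∑ i, p i ^ α := by
    rw [← hj]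
    exact Finset.single_le_sum (fun i _ => Real.rpow_nonneg (hp i) α) (Finset.mem_univ j)
  have hS_pos : 0 < ∑ i, p i ^ α := lt_of_lt_of_le (Real.rpow_pos_of_pos hpM_pos α) hS_lb
  -- upper bound on the sum
  have hS_ub : (∑ i, p i ^ α) ≤ (r : ℝ) * pM ^ α := by
    have hfilter : (∑ i ∈ Finset.univ.filter fun i => p i ≠ 0, p i ^ α) = ∑ i, p i ^ α := by
      apply Finset.sum_filter_of_ne
      intro x _ hx
      intro hpx
      exact hx (by rw [hpx]; exact Real.zero_rpow (ne_of_gt hα0))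
    rw [← hfilter]
    calc (∑ i ∈ Finset.univ.filter fun i => p i ≠ 0, p i ^ α)
        ≤ ∑ _i ∈ Finset.univ.filter fun i => p i ≠ 0, pM ^ α := by
          apply Finset.sum_le_sum
          intro i _
          exact Real.rpow_le_rpow (hp i) (hpM_ub i) (le_of_lt hα0)
      _ = (r : ℝ) * pM ^ α := by rw [Finset.sum_const, nsmul_eq_mul]
  have hr_pos : (0 : ℝ) < (r : ℝ) := by exact_mod_cast lt_of_lt_of_le one_pos hr
  -- log bounds
  have hL1 : α * Real.log pM ≤ Real.log (∑ i, p i ^ α) := by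
    have := Real.log_le_log (Real.rpow_pos_of_pos hpM_pos α) hS_lb
    rwa [Real.log_rpow hpM_pos] at this
  have hL2 : Real.log (∑ i, p i ^ α) ≤ α * Real.log pM + Real.log r := by
    have := Real.log_le_log hS_pos hS_ub
    rwa [Real.log_mul (ne_of_gt hr_pos) (ne_of_gt (Real.rpow_pos_of_pos hpM_pos α)),
      Real.log_rpow hpM_pos, add_comm] at this
  have hne1 : (1 - α) ≠ 0 := ne_of_lt h1α
  have hne2 : Real.log n ≠ 0 := ne_of_gt hlogn
  have heq1 : (α / (1 - α)) * (Real.log pM / Real.log n) = c * (α * Real.log pM) := by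
    rw [hc]; field_simp
  have heq2 : Real.log (r : ℝ) / ((1 - α) * Real.log n) = c * Real.log r := by
    rw [hc]; field_simp
  constructor
  · rw [ge_iff_le, renyiH, heq1, ← hc]
    exact mul_le_mul_of_nonpos_left hL1 (le_of_lt hcneg)
  · rw [ge_iff_le, renyiH, heq1, heq2, ← hc, ← mul_add]
    exact mul_le_mul_of_nonpos_left hL2 (le_of_lt hcneg)
end

section
/- Let p = (p_1, …, p_n) be a probability distribution with maximum component p_M > 0. Then for every α > 1, ∑_{i=1}^n p_i^α ((p_i + 1/n)/2)^{1−α} ≤ ((p_M + 1/n)/(2 p_M))^{1−α}. -/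
open Real Filter Topology

/-- For `α > 1`, `∑ i, p_i^α ((p_i + 1/n)/2)^(1-α) ≤ ((pM + 1/n)/(2 pM))^(1-α)`. -/
theorem renyi_sum_upper_bound_max (n : ℕ) (hn : 2 ≤ n) (p : Fin n → ℝ)
    (hp : ∀ i, 0 ≤ p i) (hsum : ∑ i, p i = 1)
    (pM : ℝ) (hpM_mem : ∃ i, p i = pM) (hpM_ub : ∀ i, p i ≤ pM) (hpM_pos : 0 < pM) :
    ∀ α : ℝ, 1 < α →
      (∑ i, p i ^ α * ((p i + 1 / (n : ℝ)) / 2) ^ (1 - α)) ≤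
        ((pM + 1 / (n : ℝ)) / (2 * pM)) ^ (1 - α) := by
  intro α hα
  have hn0 : (0:ℝ) < (n : ℝ) := by positivity
  set C : ℝ := ((pM + 1 / (n : ℝ)) / (2 * pM)) ^ (1 - α) with hC
  have hbase : 0 < (pM + 1 / (n : ℝ)) / (2 * pM) := by positivity
  have hCpos : 0 < C := Real.rpow_pos_of_pos hbase _
  have hterm : ∀ i, p i ^ α * ((p i + 1 / (n : ℝ)) / 2) ^ (1 - α) ≤ p i * C := by
    intro i
    rcases eq_or_lt_of_le (hp i) with h0 | hpi
    · rw [← h0, Real.zero_rpow (by linarith : α ≠ 0), zero_mul, zero_mul]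
    · have hx : 0 < (p i + 1 / (n : ℝ)) / 2 := by positivity
      have key : p i ^ α * ((p i + 1 / (n : ℝ)) / 2) ^ (1 - α)
          = p i * ((p i + 1 / (n : ℝ)) / (2 * p i)) ^ (1 - α) := by
        rw [show (p i + 1 / (n : ℝ)) / (2 * p i) = ((p i + 1 / (n : ℝ)) / 2) / p i from
          (div_div _ 2 (p i)).symm]
        rw [Real.div_rpow hx.le hpi.le]
        rw [show p i ^ α = p i ^ ((1:ℝ) - (1 - α)) by norm_num,
          Real.rpow_sub hpi, Real.rpow_one]
        field_simp
      rw [key]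
      apply mul_le_mul_of_nonneg_left _ hpi.le
      apply Real.rpow_le_rpow_of_nonpos hbase _ (by linarith)
      rw [div_le_div_iff₀ (by positivity) (by positivity)]
      have h1 := mul_le_mul_of_nonneg_right (hpM_ub i) (le_of_lt (one_div_pos.mpr hn0))
      nlinarith [h1]
  calc (∑ i, p i ^ α * ((p i + 1 / (n : ℝ)) / 2) ^ (1 - α))
      ≤ ∑ i, p i * C := Finset.sum_le_sum fun i _ => hterm i
    _ = C := by rw [← Finset.sum_mul, hsum, one_mul]
end

section
/- Let p = (p_1, …, p_n) be a probability distribution with maximum component p_M and minimum component p_m, and suppose p has more than one nonzero component. Then there exists α_0 > 1 such that for all α > α_0, D_α(p)/D_α* ≤ (α − 1) ln(4 n p_M / ((n p_M + 1)(n p_m + 1))) / [(α − 1) ln(4n/(n+1)) + ln(((n+1)^{1−α} + n − 1)/n)]. -/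
open Real Filter Topology

/-- auxiliary monotonicity lemma for terms of the form `a^α * q^(1-α)`. -/
lemma renyi_term_le {a b qa qb α : ℝ} (ha : 0 ≤ a) (hb : 0 ≤ b)
    (hqa : 0 < qa) (hqb : 0 < qb) (hα : 0 < α)
    (hq : qa ≤ qb) (hr : a / qa ≤ b / qb) :
    a ^ α * qa ^ (1 - α) ≤ b ^ α * qb ^ (1 - α) := by
  have e : ∀ x q : ℝ, 0 ≤ x → 0 < q → x ^ α * q ^ (1 - α) = q * (x / q) ^ α := by
    intro x q hx hq
    rw [Real.div_rpow hx hq.le, Real.rpow_sub hq, Real.rpow_one]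
    ring
  rw [e a qa ha hqa, e b qb hb hqb]
  exact mul_le_mul hq (Real.rpow_le_rpow (div_nonneg ha hqa.le) hr hα.le)
    (Real.rpow_nonneg (div_nonneg ha hqa.le) _) hqb.le

set_option maxHeartbeats 1600000 in
/-- Upper bound for `D_α(p)/D_α^*` for sufficiently large `α`. -/
theorem renyi_ratio_upper_bound (n : ℕ) (hn : 2 ≤ n) (p : Fin n → ℝ)
    (hp : ∀ i, 0 ≤ p i) (hsum : ∑ i, p i = 1)
    (hr : 1 < (Finset.univ.filter fun i => p i ≠ 0).card)
    (pM pm : ℝ) (hpM_mem : ∃ i, p i = pM) (hpM_ub : ∀ i, p i ≤ pM)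
    (hpm_mem : ∃ i, p i = pm) (hpm_lb : ∀ i, pm ≤ p i) :
    ∃ α₀ : ℝ, 1 < α₀ ∧ ∀ α : ℝ, α₀ < α →
      renyiD n p α / renyiDstar n α ≤
        ((α - 1) * Real.log (4 * (n : ℝ) * pM / (((n : ℝ) * pM + 1) * ((n : ℝ) * pm + 1)))) /
        ((α - 1) * Real.log (4 * (n : ℝ) / ((n : ℝ) + 1)) +
          Real.log (((((n : ℝ) + 1) ^ (1 - α) + (n : ℝ) - 1) / (n : ℝ)))) := by
  obtain ⟨iM, hiM⟩ := hpM_mem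
  obtain ⟨im, him⟩ := hpm_mem
  have hn0 : (0:ℝ) < n := by
    have : (2:ℝ) ≤ n := by exact_mod_cast hn
    linarith
  have hn2 : (2:ℝ) ≤ n := by exact_mod_cast hn
  have hpm0 : 0 ≤ pm := him ▸ hp im
  have hpM1 : pM ≤ 1 := by
    calc pM = p iM := hiM.symm
      _ ≤ ∑ i, p i := Finset.single_le_sum (fun i _ => hp i) (Finset.mem_univ iM)
      _ = 1 := hsum
  have hsum_const : ∀ c : ℝ, (∑ _i : Fin n, c) = n * c := by
    intro c; rw [Finset.sum_const, Finset.card_univ, Fintype.card_fin, nsmul_eq_mul]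
  have hpMpos : 0 < pM := by
    have h1 : (1:ℝ) ≤ n * pM := by
      calc (1:ℝ) = ∑ i, p i := hsum.symm
        _ ≤ ∑ _i : Fin n, pM := Finset.sum_le_sum (fun i _ => hpM_ub i)
        _ = n * pM := hsum_const pM
    nlinarith
  have hnpm : (n:ℝ) * pm ≤ 1 := by
    calc (n:ℝ) * pm = ∑ _i : Fin n, pm := (hsum_const pm).symm
      _ ≤ ∑ i, p i := Finset.sum_le_sum (fun i _ => hpm_lb i)
      _ = 1 := hsum
  set qM : ℝ := (pM + 1 / n) / 2 with hqM_def
  set qm : ℝ := (pm + 1 / n) / 2 with hqm_def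
  have hqMpos : 0 < qM := by positivity
  have hqmpos : 0 < qm := by positivity
  have hqi_pos : ∀ i, 0 < (p i + 1 / (n:ℝ)) / 2 := fun i => by
    have := hp i; positivity
  have hlogratio : 0 < Real.log (4 * (n:ℝ) / ((n:ℝ) + 1)) := by
    apply Real.log_pos
    rw [lt_div_iff₀ (by linarith)]
    linarith
  refine ⟨1 + 2 / Real.log (4 * (n:ℝ) / ((n:ℝ) + 1)), lt_add_of_pos_right 1 (by positivity), ?_⟩
  intro α hα
  have hα1 : 1 < α := by
    have : 0 < 2 / Real.log (4 * (n:ℝ) / ((n:ℝ) + 1)) := by positivity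
    linarith
  have hα0 : 0 < α := by linarith
  have hc : (1 / (2 * (α - 1)) : ℝ) ≠ 0 := by
    have : α - 1 ≠ 0 := by linarith
    positivity
  -- denominators etc.
  set F : ℝ := (((n:ℝ) + 1) ^ (1 - α) + (n:ℝ) - 1) / (n:ℝ) with hF_def
  have hFpos : 0 < F := by
    have h1 : (0:ℝ) < ((n:ℝ) + 1) ^ (1 - α) := Real.rpow_pos_of_pos (by linarith) _
    rw [hF_def]
    apply div_pos (by linarith) hn0
  have hGpos : (0:ℝ) < (((n:ℝ) + 1) / (4 * (n:ℝ))) ^ (1 - α) :=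
    Real.rpow_pos_of_pos (by positivity) _
  -- denominator positivity
  have hden2 : 2 < (α - 1) * Real.log (4 * (n:ℝ) / ((n:ℝ) + 1)) := by
    have h2 : 2 / Real.log (4 * (n:ℝ) / ((n:ℝ) + 1)) < α - 1 := by linarith
    calc (2:ℝ) = 2 / Real.log (4 * (n:ℝ) / ((n:ℝ) + 1)) * Real.log (4 * (n:ℝ) / ((n:ℝ) + 1)) := by
          field_simp
      _ < (α - 1) * Real.log (4 * (n:ℝ) / ((n:ℝ) + 1)) := by
          exact mul_lt_mul_of_pos_right h2 hlogratio
  have hlogF : Real.log ((1:ℝ)/2) ≤ Real.log F := by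
    apply Real.log_le_log (by norm_num)
    have h1 : (0:ℝ) < ((n:ℝ) + 1) ^ (1 - α) := Real.rpow_pos_of_pos (by linarith) _
    rw [hF_def, div_le_div_iff₀ (by norm_num) hn0]
    nlinarith
  have hlog2 : Real.log 2 ≤ 1 := by
    have := Real.log_le_sub_one_of_pos (x := 2) (by norm_num)
    linarith
  have hdenpos : 0 < (α - 1) * Real.log (4 * (n:ℝ) / ((n:ℝ) + 1)) + Real.log F := by
    have : Real.log ((1:ℝ)/2) = -Real.log 2 := by
      rw [one_div, Real.log_inv]
    linarith
  -- rewrite renyiDstar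
  have hDstar : renyiDstar n α = (1 / (2 * (α - 1))) *
      ((α - 1) * Real.log (4 * (n:ℝ) / ((n:ℝ) + 1)) + Real.log F) := by
    rw [renyiDstar]
    congr 1
    rw [Real.log_mul hFpos.ne' hGpos.ne',
      Real.log_rpow (by positivity : (0:ℝ) < ((n:ℝ) + 1) / (4 * (n:ℝ)))]
    have hinv : ((n:ℝ) + 1) / (4 * (n:ℝ)) = (4 * (n:ℝ) / ((n:ℝ) + 1))⁻¹ := by
      rw [inv_div]
    rw [hinv, Real.log_inv]
    ring
  -- abbreviations for the two sums
  set A : ℝ := ∑ i, p i ^ α * ((p i + 1 / (n : ℝ)) / 2) ^ (1 - α) with hA_def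
  set B : ℝ := ∑ i, (n : ℝ) ^ (-α) * ((p i + 1 / (n : ℝ)) / 2) ^ (1 - α) with hB_def
  -- positivity of A and B
  have htermM : 0 < pM ^ α * qM ^ (1 - α) := by positivity
  have hApos : 0 < A := by
    have hle : pM ^ α * qM ^ (1 - α) ≤ A := by
      rw [hA_def]
      have : pM ^ α * qM ^ (1 - α) = p iM ^ α * ((p iM + 1 / (n : ℝ)) / 2) ^ (1 - α) := by
        rw [hiM, hqM_def]
      rw [this]
      refine Finset.single_le_sum
        (f := fun i => p i ^ α * ((p i + 1 / (n : ℝ)) / 2) ^ (1 - α)) ?_ (Finset.mem_univ iM)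
      intro i _
      have h1 := hp i
      have h2 := (hqi_pos i).le
      positivity
    linarith
  have hBpos : 0 < B := by
    rw [hB_def]
    apply Finset.sum_pos (fun i _ => by
      have h1 : (0:ℝ) < (n:ℝ) ^ (-α) := Real.rpow_pos_of_pos hn0 _
      have h2 := hqi_pos i
      positivity) ⟨iM, Finset.mem_univ iM⟩
  -- upper bounds on A and B
  have hratio : ∀ i, p i / ((p i + 1 / (n:ℝ)) / 2) ≤ pM / qM := by
    intro i
    rw [div_le_div_iff₀ (hqi_pos i) hqMpos, hqM_def]
    have h1 := hpM_ub i
    have h2 := hp i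
    have h3 : (0:ℝ) < 1 / n := by positivity
    nlinarith
  have hAle : A ≤ (pM / qM) ^ (α - 1) := by
    have hterm : ∀ i, p i ^ α * ((p i + 1 / (n:ℝ)) / 2) ^ (1 - α)
        ≤ p i * (pM / qM) ^ (α - 1) := by
      intro i
      have hqi := hqi_pos i
      rcases eq_or_lt_of_le (hp i) with h0 | hpos
      · rw [← h0, Real.zero_rpow hα0.ne', zero_mul, zero_mul]
      · have h1 : p i ^ α = p i * p i ^ (α - 1) := by
          have h := Real.rpow_add hpos 1 (α - 1)
          rw [Real.rpow_one, show (1:ℝ) + (α - 1) = α by ring] at h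
          exact h
        have h2 : ((p i + 1 / (n:ℝ)) / 2) ^ (1 - α)
            = (((p i + 1 / (n:ℝ)) / 2) ^ (α - 1))⁻¹ := by
          rw [show (1 - α) = -(α - 1) by ring, Real.rpow_neg hqi.le]
        have e : p i ^ α * ((p i + 1 / (n:ℝ)) / 2) ^ (1 - α)
            = p i * (p i / ((p i + 1 / (n:ℝ)) / 2)) ^ (α - 1) := by
          rw [h1, h2, Real.div_rpow (hp i) hqi.le]
          ring
        rw [e]
        apply mul_le_mul_of_nonneg_left _ (hp i)
        exact Real.rpow_le_rpow (div_nonneg (hp i) hqi.le) (hratio i) (by linarith)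
    calc A ≤ ∑ i, p i * (pM / qM) ^ (α - 1) := Finset.sum_le_sum (fun i _ => hterm i)
      _ = (pM / qM) ^ (α - 1) := by rw [← Finset.sum_mul, hsum, one_mul]
  have hBle : B ≤ (n:ℝ) * ((n:ℝ) ^ (-α) * qm ^ (1 - α)) := by
    rw [hB_def]
    calc (∑ i, (n : ℝ) ^ (-α) * ((p i + 1 / (n : ℝ)) / 2) ^ (1 - α))
        ≤ ∑ _i : Fin n, (n:ℝ) ^ (-α) * qm ^ (1 - α) := by
          apply Finset.sum_le_sum
          intro i _
          apply mul_le_mul_of_nonneg_left _ (Real.rpow_pos_of_pos hn0 (-α)).le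
          apply Real.rpow_le_rpow_of_nonpos hqmpos _ (by linarith)
          rw [hqm_def]
          have := hpm_lb i; linarith
      _ = (n:ℝ) * ((n:ℝ) ^ (-α) * qm ^ (1 - α)) := hsum_const _
  -- log bounds
  have hlogA : Real.log A ≤ (α - 1) * (Real.log pM - Real.log qM) := by
    calc Real.log A ≤ Real.log ((pM / qM) ^ (α - 1)) :=
          Real.log_le_log hApos hAle
      _ = (α - 1) * (Real.log pM - Real.log qM) := by
          rw [Real.log_rpow (div_pos hpMpos hqMpos), Real.log_div hpMpos.ne' hqMpos.ne']
  have hlogB : Real.log B ≤ Real.log n + (-α * Real.log n + (1 - α) * Real.log qm) := by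
    have h1 : (0:ℝ) < (n:ℝ) ^ (-α) := Real.rpow_pos_of_pos hn0 _
    calc Real.log B ≤ Real.log ((n:ℝ) * ((n:ℝ) ^ (-α) * qm ^ (1 - α))) :=
          Real.log_le_log hBpos hBle
      _ = Real.log n + (-α * Real.log n + (1 - α) * Real.log qm) := by
        rw [Real.log_mul hn0.ne' (by positivity), Real.log_mul (by positivity) (by positivity),
          Real.log_rpow hn0, Real.log_rpow hqmpos]
  -- identify the numerator logarithm
  have hL : Real.log (4 * (n : ℝ) * pM / (((n : ℝ) * pM + 1) * ((n : ℝ) * pm + 1)))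
      = Real.log pM - (Real.log n + Real.log qM + Real.log qm) := by
    have e1 : 4 * (n : ℝ) * pM / (((n : ℝ) * pM + 1) * ((n : ℝ) * pm + 1))
        = pM / ((n:ℝ) * qM * qm) := by
      rw [hqM_def, hqm_def, div_eq_div_iff (by positivity) (by positivity)]
      have hn' : (n:ℝ) ≠ 0 := hn0.ne'
      field_simp
      ring
    rw [e1, Real.log_div hpMpos.ne' (mul_pos (mul_pos hn0 hqMpos) hqmpos).ne',
      Real.log_mul (mul_pos hn0 hqMpos).ne' hqmpos.ne', Real.log_mul hn0.ne' hqMpos.ne']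
  -- main inequality on numerators
  have hmain : Real.log A + Real.log B ≤
      (α - 1) * Real.log (4 * (n : ℝ) * pM / (((n : ℝ) * pM + 1) * ((n : ℝ) * pm + 1))) := by
    rw [hL]
    have key : (α - 1) * (Real.log pM - Real.log qM)
        + (Real.log n + (-α * Real.log n + (1 - α) * Real.log qm))
        = (α - 1) * (Real.log pM - (Real.log n + Real.log qM + Real.log qm)) := by ring
    linarith [hlogA, hlogB, key]
  -- put everything together
  rw [renyiD, hDstar, mul_div_mul_left _ _ hc]
  exact (div_le_div_iff_of_pos_right hdenpos).mpr hmain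
end

section
/- Let p = (p_1, …, p_n) be a probability distribution with maximum component p_M and minimum component p_m, and suppose p has more than one nonzero component. Then there exists α_0 > 1 such that for all α > α_0, D_α(p)/D_α* ≥ [(α − 1) ln(4 n p_M / ((n p_M + 1)(n p_m + 1))) + ln(p_M/n)] / [(α − 1) ln(4n/(n+1)) + ln(((n+1)^{1−α} + n − 1)/n)]. -/
open Real Filter Topology

/-- Lower bound for `D_α(p)/D_α^*` for sufficiently large `α`. -/
theorem renyi_ratio_lower_bound (n : ℕ) (hn : 2 ≤ n) (p : Fin n → ℝ)
    (hp : ∀ i, 0 ≤ p i) (hsum : ∑ i, p i = 1)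
    (hr : 1 < (Finset.univ.filter fun i => p i ≠ 0).card)
    (pM pm : ℝ) (hpM_mem : ∃ i, p i = pM) (hpM_ub : ∀ i, p i ≤ pM)
    (hpm_mem : ∃ i, p i = pm) (hpm_lb : ∀ i, pm ≤ p i) :
    ∃ α₀ : ℝ, 1 < α₀ ∧ ∀ α : ℝ, α₀ < α →
      renyiD n p α / renyiDstar n α ≥
        ((α - 1) * Real.log (4 * (n : ℝ) * pM / (((n : ℝ) * pM + 1) * ((n : ℝ) * pm + 1))) +
          Real.log (pM / (n : ℝ))) /
        ((α - 1) * Real.log (4 * (n : ℝ) / ((n : ℝ) + 1)) +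
          Real.log (((((n : ℝ) + 1) ^ (1 - α) + (n : ℝ) - 1) / (n : ℝ)))) := by

  obtain ⟨iM, hiM⟩ := hpM_mem
  obtain ⟨im, him⟩ := hpm_mem
  have hn2 : (2:ℝ) ≤ (n:ℝ) := by exact_mod_cast hn
  have hn0 : (0:ℝ) < n := by linarith
  have hn1 : (1:ℝ) < n := by linarith
  obtain ⟨j, hj⟩ : ∃ j, p j ≠ 0 := by
    obtain ⟨j, hj⟩ := Finset.card_pos.mp (lt_trans one_pos hr)
    exact ⟨j, (Finset.mem_filter.mp hj).2⟩
  have hpM_pos : 0 < pM :=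
    lt_of_lt_of_le (lt_of_le_of_ne (hp j) (Ne.symm hj)) (hpM_ub j)
  have hpm0 : 0 ≤ pm := him ▸ hp im
  set L := Real.log (4*(n:ℝ)/((n:ℝ)+1)) with hLdef
  have hL : 0 < L := Real.log_pos (by rw [lt_div_iff₀ (by linarith)]; linarith)
  have hlogn : 0 < Real.log n := Real.log_pos hn1
  refine ⟨1 + (Real.log n + 1)/L, by
    have : 0 < (Real.log n + 1)/L := div_pos (by linarith) hL
    linarith, ?_⟩
  intro α hα
  have hα1 : 1 < α := by
    have : 0 < (Real.log n + 1)/L := div_pos (by linarith) hL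
    linarith
  have hαL : Real.log n + 1 < (α - 1) * L := by
    have h1 : (Real.log n + 1)/L < α - 1 := by linarith
    have := (div_lt_iff₀ hL).mp h1
    linarith
  -- positivity facts
  have hA_pos : (0:ℝ) < ((n:ℝ)+1)^(1-α) + (n:ℝ) - 1 := by
    have := Real.rpow_nonneg (by linarith : (0:ℝ) ≤ (n:ℝ)+1) (1-α)
    linarith
  have hA'_pos : (0:ℝ) < (((n:ℝ)+1)^(1-α) + (n:ℝ) - 1) / n := div_pos hA_pos hn0
  have hB_pos : (0:ℝ) < (((n:ℝ)+1)/(4*(n:ℝ)))^(1-α) :=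
    Real.rpow_pos_of_pos (by positivity) _
  -- denominator positivity
  have hlogA : -Real.log n ≤ Real.log ((((n:ℝ)+1)^(1-α) + (n:ℝ) - 1) / n) := by
    have h1 : (1:ℝ) ≤ ((n:ℝ)+1)^(1-α) + (n:ℝ) - 1 := by
      have := Real.rpow_nonneg (by linarith : (0:ℝ) ≤ (n:ℝ)+1) (1-α)
      linarith
    have h2 : (1:ℝ)/n ≤ (((n:ℝ)+1)^(1-α) + (n:ℝ) - 1) / n := by gcongr
    have h3 := Real.log_le_log (by positivity) h2
    rwa [Real.log_div one_ne_zero hn0.ne', Real.log_one, zero_sub] at h3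
  have hdenom : 0 < (α - 1) * L + Real.log ((((n:ℝ)+1)^(1-α) + (n:ℝ) - 1) / n) := by
    linarith
  -- log of the Dstar product
  have e1 : Real.log (((n:ℝ)+1)/(4*(n:ℝ))) = -L := by
    rw [hLdef, Real.log_div (by positivity) (by positivity),
        Real.log_div (by positivity) (by positivity)]
    ring
  have hABlog : Real.log (((((n:ℝ)+1)^(1-α) + (n:ℝ) - 1) / n) *
      (((n:ℝ)+1)/(4*(n:ℝ)))^(1-α)) =
      (α - 1) * L + Real.log ((((n:ℝ)+1)^(1-α) + (n:ℝ) - 1) / n) := by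
    rw [Real.log_mul hA'_pos.ne' hB_pos.ne', Real.log_rpow (by positivity), e1]
    ring
  -- lower bounds for the two sums
  set aM : ℝ := (pM + 1/(n:ℝ))/2 with haM
  set am : ℝ := (pm + 1/(n:ℝ))/2 with ham
  have haM_pos : 0 < aM := by rw [haM]; positivity
  have ham_pos : 0 < am := by rw [ham]; have := hpm0; positivity
  have hT1_pos : 0 < pM ^ α * aM ^ (1-α) :=
    mul_pos (Real.rpow_pos_of_pos hpM_pos _) (Real.rpow_pos_of_pos haM_pos _)
  have hT2_pos : 0 < (n:ℝ) ^ (-α) * am ^ (1-α) :=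
    mul_pos (Real.rpow_pos_of_pos hn0 _) (Real.rpow_pos_of_pos ham_pos _)
  have hT1_le : pM ^ α * aM ^ (1-α) ≤ ∑ i, p i ^ α * ((p i + 1/(n:ℝ))/2) ^ (1-α) := by
    have := Finset.single_le_sum
      (f := fun i => p i ^ α * ((p i + 1/(n:ℝ))/2) ^ (1-α))
      (fun i _ => mul_nonneg (Real.rpow_nonneg (hp i) _)
        (Real.rpow_nonneg (by have := hp i; positivity) _))
      (Finset.mem_univ iM)
    simpa only [hiM] using this
  have hT2_le : (n:ℝ) ^ (-α) * am ^ (1-α) ≤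
      ∑ i, (n:ℝ) ^ (-α) * ((p i + 1/(n:ℝ))/2) ^ (1-α) := by
    have := Finset.single_le_sum
      (f := fun i => (n:ℝ) ^ (-α) * ((p i + 1/(n:ℝ))/2) ^ (1-α))
      (fun i _ => mul_nonneg (Real.rpow_nonneg hn0.le _)
        (Real.rpow_nonneg (by have := hp i; positivity) _))
      (Finset.mem_univ im)
    simpa only [him] using this
  have hS1_pos : 0 < ∑ i, p i ^ α * ((p i + 1/(n:ℝ))/2) ^ (1-α) :=
    lt_of_lt_of_le hT1_pos hT1_le
  have hS2_pos : 0 < ∑ i, (n:ℝ) ^ (-α) * ((p i + 1/(n:ℝ))/2) ^ (1-α) :=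
    lt_of_lt_of_le hT2_pos hT2_le
  have hlogS1 : α * Real.log pM + (1-α) * Real.log aM ≤
      Real.log (∑ i, p i ^ α * ((p i + 1/(n:ℝ))/2) ^ (1-α)) := by
    have h := Real.log_le_log hT1_pos hT1_le
    rwa [Real.log_mul (Real.rpow_pos_of_pos hpM_pos _).ne'
      (Real.rpow_pos_of_pos haM_pos _).ne', Real.log_rpow hpM_pos,
      Real.log_rpow haM_pos] at h
  have hlogS2 : (-α) * Real.log n + (1-α) * Real.log am ≤
      Real.log (∑ i, (n:ℝ) ^ (-α) * ((p i + 1/(n:ℝ))/2) ^ (1-α)) := by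
    have h := Real.log_le_log hT2_pos hT2_le
    rwa [Real.log_mul (Real.rpow_pos_of_pos hn0 _).ne'
      (Real.rpow_pos_of_pos ham_pos _).ne', Real.log_rpow hn0,
      Real.log_rpow ham_pos] at h
  -- key identity for the numerator log
  have hnpM : (0:ℝ) < (n:ℝ)*pM + 1 := by positivity
  have hnpm : (0:ℝ) < (n:ℝ)*pm + 1 := by nlinarith
  have heq : 4*(n:ℝ)*pM/(((n:ℝ)*pM+1)*((n:ℝ)*pm+1)) = pM / (aM * ((n:ℝ) * am)) := by
    rw [haM, ham]
    field_simp
    ring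
  have hkey : Real.log (4*(n:ℝ)*pM/(((n:ℝ)*pM+1)*((n:ℝ)*pm+1))) =
      Real.log pM - Real.log aM - Real.log n - Real.log am := by
    rw [heq, Real.log_div hpM_pos.ne' (by positivity),
        Real.log_mul haM_pos.ne' (by positivity),
        Real.log_mul hn0.ne' ham_pos.ne']
    ring
  have hlogpMn : Real.log (pM/(n:ℝ)) = Real.log pM - Real.log n :=
    Real.log_div hpM_pos.ne' hn0.ne'
  -- numerator ≤ log S1 + log S2
  have hnum_le : (α - 1) * Real.log (4*(n:ℝ)*pM/(((n:ℝ)*pM+1)*((n:ℝ)*pm+1))) +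
      Real.log (pM/(n:ℝ)) ≤
      Real.log (∑ i, p i ^ α * ((p i + 1/(n:ℝ))/2) ^ (1-α)) +
      Real.log (∑ i, (n:ℝ) ^ (-α) * ((p i + 1/(n:ℝ))/2) ^ (1-α)) := by
    rw [hkey, hlogpMn]
    have hrg : (α-1)*(Real.log pM - Real.log aM - Real.log n - Real.log am) +
        (Real.log pM - Real.log n) =
        (α * Real.log pM + (1-α) * Real.log aM) +
        ((-α) * Real.log n + (1-α) * Real.log am) := by ring
    linarith [hlogS1, hlogS2]
  -- assemble
  rw [ge_iff_le, renyiD, renyiDstar, hABlog]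
  have hc : (1:ℝ)/(2*(α-1)) ≠ 0 := by
    have : (0:ℝ) < 2*(α-1) := by linarith
    positivity
  rw [mul_div_mul_left _ _ hc]
  exact (div_le_div_iff_of_pos_right hdenom).mpr hnum_le
end

section
/- Let p = (p_1, …, p_n) be a probability distribution with maximum component p_M and minimum component p_m, and suppose p has more than one nonzero component. Then the limit of D_α(p)/D_α* as α → ∞ equals (ln(4 n p_M) − ln((n p_M + 1)(n p_m + 1)))/(ln(4n) − ln(n + 1)). -/
open Real Filter Topology

lemma logsum_tendsto {n : ℕ} (c r : Fin n → ℝ) (hc : ∀ i, 0 < c i)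
    (hr : ∀ i, 0 ≤ r i) (R : ℝ) (hR : 0 < R) (i0 : Fin n) (hi0 : r i0 = R)
    (hle : ∀ i, r i ≤ R) :
    Tendsto (fun α : ℝ => (1/α) * Real.log (∑ i, c i * r i ^ α)) atTop
      (nhds (Real.log R)) := by
  have h0 : Tendsto (fun α : ℝ => 1/α) atTop (nhds (0:ℝ)) := by
    simpa [one_div] using tendsto_inv_atTop_zero
  apply tendsto_of_tendsto_of_tendsto_of_le_of_le'
    (g := fun α : ℝ => (1/α) * Real.log (c i0) + Real.log R)
    (h := fun α : ℝ => (1/α) * Real.log (∑ i, c i) + Real.log R)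
  · simpa using (h0.mul_const (Real.log (c i0))).add_const (Real.log R)
  · simpa using (h0.mul_const (Real.log (∑ i, c i))).add_const (Real.log R)
  · filter_upwards [eventually_ge_atTop (1:ℝ)] with α hα
    have hαpos : (0:ℝ) < α := by linarith
    have hterm : c i0 * R ^ α ≤ ∑ i, c i * r i ^ α := by
      rw [← hi0]
      exact Finset.single_le_sum
        (fun i _ => mul_nonneg (hc i).le (Real.rpow_nonneg (hr i) α))
        (Finset.mem_univ i0)
    have hpos0 : 0 < c i0 * R ^ α := mul_pos (hc i0) (Real.rpow_pos_of_pos hR α)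
    have hlog := Real.log_le_log hpos0 hterm
    have key : (1/α) * Real.log (c i0 * R ^ α)
        = (1/α) * Real.log (c i0) + Real.log R := by
      rw [Real.log_mul (hc i0).ne' (Real.rpow_pos_of_pos hR α).ne', Real.log_rpow hR]
      field_simp
    calc (1/α) * Real.log (c i0) + Real.log R
        = (1/α) * Real.log (c i0 * R ^ α) := key.symm
      _ ≤ (1/α) * Real.log (∑ i, c i * r i ^ α) :=
          mul_le_mul_of_nonneg_left hlog (by positivity)
  · filter_upwards [eventually_ge_atTop (1:ℝ)] with α hα
    have hαpos : (0:ℝ) < α := by linarith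
    have hsum_le : ∑ i, c i * r i ^ α ≤ (∑ i, c i) * R ^ α := by
      rw [Finset.sum_mul]
      exact Finset.sum_le_sum fun i _ =>
        mul_le_mul_of_nonneg_left (Real.rpow_le_rpow (hr i) (hle i) (by linarith)) (hc i).le
    have hterm : c i0 * R ^ α ≤ ∑ i, c i * r i ^ α := by
      rw [← hi0]
      exact Finset.single_le_sum
        (fun i _ => mul_nonneg (hc i).le (Real.rpow_nonneg (hr i) α))
        (Finset.mem_univ i0)
    have hpos0 : 0 < c i0 * R ^ α := mul_pos (hc i0) (Real.rpow_pos_of_pos hR α)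
    have hspos : 0 < ∑ i, c i * r i ^ α := lt_of_lt_of_le hpos0 hterm
    have hcs : 0 < ∑ i, c i := Finset.sum_pos (fun i _ => hc i) ⟨i0, Finset.mem_univ i0⟩
    have hlog := Real.log_le_log hspos hsum_le
    have key : (1/α) * Real.log ((∑ i, c i) * R ^ α)
        = (1/α) * Real.log (∑ i, c i) + Real.log R := by
      rw [Real.log_mul hcs.ne' (Real.rpow_pos_of_pos hR α).ne', Real.log_rpow hR]
      field_simp
    calc (1/α) * Real.log (∑ i, c i * r i ^ α)
        ≤ (1/α) * Real.log ((∑ i, c i) * R ^ α) :=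
          mul_le_mul_of_nonneg_left hlog (by positivity)
      _ = (1/α) * Real.log (∑ i, c i) + Real.log R := key


/-- `D_α(p)/D_α^* → (ln(4 n pM) - ln((n pM + 1)(n pm + 1)))/(ln(4n) - ln(n+1))` as `α → ∞`. -/
theorem renyi_ratio_limit_infty (n : ℕ) (hn : 2 ≤ n) (p : Fin n → ℝ)
    (hp : ∀ i, 0 ≤ p i) (hsum : ∑ i, p i = 1)
    (hr : 1 < (Finset.univ.filter fun i => p i ≠ 0).card)
    (pM pm : ℝ) (hpM_mem : ∃ i, p i = pM) (hpM_ub : ∀ i, p i ≤ pM)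
    (hpm_mem : ∃ i, p i = pm) (hpm_lb : ∀ i, pm ≤ p i) :
    Filter.Tendsto (fun α => renyiD n p α / renyiDstar n α) Filter.atTop
      (nhds ((Real.log (4 * (n : ℝ) * pM) -
          Real.log (((n : ℝ) * pM + 1) * ((n : ℝ) * pm + 1))) /
        (Real.log (4 * (n : ℝ)) - Real.log ((n : ℝ) + 1)))) := by
  obtain ⟨iM, hiM⟩ := hpM_mem
  obtain ⟨im, him⟩ := hpm_mem
  set N : ℝ := (n : ℝ) with hN
  have hN2 : (2:ℝ) ≤ N := by rw [hN]; exact_mod_cast hn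
  have hN0 : (0:ℝ) < N := by linarith
  have hpMpos : 0 < pM := by
    by_contra h
    push_neg at h
    have hz : ∀ i, p i = 0 := fun i => le_antisymm (le_trans (hpM_ub i) h) (hp i)
    simp [hz] at hsum
  have hpm0 : 0 ≤ pm := him ▸ hp im
  set c : Fin n → ℝ := fun i => (p i + 1/N)/2 with hc_def
  have hc : ∀ i, 0 < c i := fun i => by
    have := hp i; simp only [hc_def]; positivity
  set r1 : Fin n → ℝ := fun i => p i / c i with hr1_def
  set r2 : Fin n → ℝ := fun i => (1/N) / c i with hr2_def
  set R1 : ℝ := pM / ((pM + 1/N)/2) with hR1_def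
  set R2 : ℝ := (1/N) / ((pm + 1/N)/2) with hR2_def
  have hcM : c iM = (pM + 1/N)/2 := by simp [hc_def, hiM]
  have hcm : c im = (pm + 1/N)/2 := by simp [hc_def, him]
  have hR1pos : 0 < R1 := by
    have : 0 < (pM + 1/N)/2 := by positivity
    exact div_pos hpMpos this
  have hR2pos : 0 < R2 := by
    have h1 : 0 < (pm + 1/N)/2 := by positivity
    have h2 : 0 < 1/N := by positivity
    exact div_pos h2 h1
  have hr1le : ∀ i, r1 i ≤ R1 := by
    intro i
    rw [hr1_def, hR1_def]
    have hci := hc i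
    have hcMp : (0:ℝ) < (pM + 1/N)/2 := by positivity
    rw [div_le_div_iff₀ hci hcMp]
    have hub := hpM_ub i
    have hpi := hp i
    have hNi : (0:ℝ) < 1/N := by positivity
    simp only [hc_def]
    nlinarith [mul_le_mul_of_nonneg_left hub (le_of_lt hNi)]
  have hr2le : ∀ i, r2 i ≤ R2 := by
    intro i
    rw [hr2_def, hR2_def]
    have hci := hc i
    have hcmp : (0:ℝ) < (pm + 1/N)/2 := by positivity
    have hkey : (pm + 1/N)/2 ≤ c i := by
      simp only [hc_def]
      have := hpm_lb i
      linarith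
    have hNi : (0:ℝ) ≤ 1/N := by positivity
    rw [div_le_div_iff₀ hci hcmp]
    exact mul_le_mul_of_nonneg_left hkey hNi
  have hT1 : Tendsto (fun α : ℝ => (1/α) * Real.log (∑ i, c i * r1 i ^ α)) atTop
      (nhds (Real.log R1)) := by
    apply logsum_tendsto c r1 hc (fun i => div_nonneg (hp i) (hc i).le) R1 hR1pos iM _ hr1le
    rw [hr1_def]; simp only; rw [hcM, hiM, hR1_def]
  have hT2 : Tendsto (fun α : ℝ => (1/α) * Real.log (∑ i, c i * r2 i ^ α)) atTop
      (nhds (Real.log R2)) := by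
    apply logsum_tendsto c r2 hc (fun i => div_nonneg (by positivity) (hc i).le) R2 hR2pos im _ hr2le
    rw [hr2_def]; simp only; rw [hcm, hR2_def]
  have hS1 : ∀ α : ℝ, (∑ i, p i ^ α * ((p i + 1/N)/2) ^ (1-α)) = ∑ i, c i * r1 i ^ α := by
    intro α
    refine Finset.sum_congr rfl fun i _ => ?_
    have hci := hc i
    have hpi := hp i
    rw [hr1_def]
    simp only [hc_def]
    rw [Real.rpow_sub (by positivity), Real.div_rpow hpi (by positivity), Real.rpow_one]
    ring
  have hS2 : ∀ α : ℝ, (∑ i, N ^ (-α) * ((p i + 1/N)/2) ^ (1-α)) = ∑ i, c i * r2 i ^ α := by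
    intro α
    refine Finset.sum_congr rfl fun i _ => ?_
    have hci := hc i
    have hpi := hp i
    rw [hr2_def]
    simp only [hc_def]
    rw [Real.rpow_sub (by positivity), Real.div_rpow (by positivity : (0:ℝ) ≤ 1/N) (by positivity),
      Real.rpow_one, Real.rpow_neg hN0.le, one_div, Real.inv_rpow hN0.le]
    ring
  have hhalf : Tendsto (fun α : ℝ => α / (2*(α-1))) atTop (nhds (1/2 : ℝ)) := by
    have h0 : Tendsto (fun α : ℝ => 1/α) atTop (nhds (0:ℝ)) := by
      simpa [one_div] using tendsto_inv_atTop_zero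
    have h2 : Tendsto (fun α : ℝ => 2 - 2*(1/α)) atTop (nhds (2:ℝ)) := by
      have := ((h0.const_mul (2:ℝ)).const_sub (2:ℝ))
      simpa using this
    have hdiv : Tendsto (fun α : ℝ => 1 / (2 - 2*(1/α))) atTop (nhds ((1:ℝ)/2)) :=
      (tendsto_const_nhds (x := (1:ℝ))).div h2 (by norm_num)
    refine hdiv.congr' ?_
    filter_upwards [eventually_ge_atTop (2:ℝ)] with α hα
    have hα0 : α ≠ 0 := by intro h; rw [h] at hα; norm_num at hα
    have hα1 : α - 1 ≠ 0 := by intro h; have := sub_eq_zero.mp h; linarith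
    have hkey : 2 - 2*(1/α) = 2*(α-1)/α := by field_simp
    rw [hkey, one_div_div]
  have hD : Tendsto (fun α : ℝ => renyiD n p α) atTop
      (nhds ((1/2) * (Real.log R1 + Real.log R2))) := by
    have hcomb := hhalf.mul (hT1.add hT2)
    refine Tendsto.congr' ?_ hcomb
    filter_upwards [eventually_ge_atTop (2:ℝ)] with α hα
    have hα0 : α ≠ 0 := by intro h; rw [h] at hα; norm_num at hα
    have hα1 : α - 1 ≠ 0 := by intro h; have := sub_eq_zero.mp h; linarith
    refine Eq.symm ?_
    rw [renyiD, ← hN, hS1 α, hS2 α]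
    field_simp
  have hLstar : Tendsto (fun α : ℝ => renyiDstar n α) atTop
      (nhds ((1/2) * (Real.log (4*N) - Real.log (N+1)))) := by
    have hinv : Tendsto (fun α : ℝ => 1 / (2*(α-1))) atTop (nhds (0:ℝ)) := by
      have hat : Tendsto (fun α : ℝ => 2*(α-1)) atTop atTop := by
        apply Tendsto.const_mul_atTop (by norm_num : (0:ℝ) < 2)
        exact tendsto_atTop_add_const_right _ _ tendsto_id
      exact hat.inv_tendsto_atTop.congr fun α => (one_div _).symm
    have hpow : Tendsto (fun α : ℝ => (N+1) ^ (1-α)) atTop (nhds (0:ℝ)) := by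
      have hlogN1 : (0:ℝ) < Real.log (N+1) := Real.log_pos (by linarith)
      have hbot : Tendsto (fun α : ℝ => 1 - α) atTop atBot := by
        have := tendsto_atBot_add_const_right atTop (1:ℝ) tendsto_neg_atTop_atBot
        refine this.congr fun α => by ring
      have hexp : Tendsto (fun α : ℝ => (1-α) * Real.log (N+1)) atTop atBot :=
        hbot.atBot_mul_const hlogN1
      have := Real.tendsto_exp_atBot.comp hexp
      refine this.congr fun α => ?_
      rw [Function.comp_apply, Real.rpow_def_of_pos (by linarith : (0:ℝ) < N+1), mul_comm]
    have hA : Tendsto (fun α : ℝ => ((N+1) ^ (1-α) + N - 1)/N) atTop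
        (nhds ((N-1)/N)) := by
      have := (hpow.add_const (N-1)).div_const N
      simp only [zero_add] at this
      refine this.congr fun α => by ring_nf
    have hlogA : Tendsto (fun α : ℝ => Real.log (((N+1) ^ (1-α) + N - 1)/N)) atTop
        (nhds (Real.log ((N-1)/N))) := by
      refine hA.log ?_
      have : (0:ℝ) < (N-1)/N := by
        apply div_pos <;> linarith
      exact this.ne'
    have hcomb := (hinv.mul hlogA).add_const ((-(1/2)) * Real.log ((N+1)/(4*N)))
    have hval : (0:ℝ) * Real.log ((N-1)/N) + (-(1/2)) * Real.log ((N+1)/(4*N))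
        = (1/2) * (Real.log (4*N) - Real.log (N+1)) := by
      rw [Real.log_div (ne_of_gt (by linarith : (0:ℝ) < N+1))
        (ne_of_gt (by linarith : (0:ℝ) < 4*N))]
      ring
    rw [hval] at hcomb
    refine Tendsto.congr' ?_ hcomb
    filter_upwards [eventually_ge_atTop (2:ℝ)] with α hα
    have hα1 : α - 1 ≠ 0 := by intro h; have := sub_eq_zero.mp h; linarith
    have hApos : (0:ℝ) < ((N+1) ^ (1-α) + N - 1)/N := by
      have h1 : (0:ℝ) < (N+1) ^ (1-α) := Real.rpow_pos_of_pos (by linarith) _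
      apply div_pos (by linarith) hN0
    have hBpos : (0:ℝ) < ((N+1)/(4*N)) ^ (1-α) :=
      Real.rpow_pos_of_pos (div_pos (by linarith) (by linarith)) _
    refine Eq.symm ?_
    rw [renyiDstar, ← hN]
    rw [Real.log_mul hApos.ne' hBpos.ne',
      Real.log_rpow (div_pos (by linarith) (by linarith))]
    field_simp
    ring
  have hlog_lt : Real.log (N+1) < Real.log (4*N) :=
    Real.log_lt_log (by linarith) (by linarith)
  have hLne : (1/2 : ℝ) * (Real.log (4*N) - Real.log (N+1)) ≠ 0 := by
    have : (0:ℝ) < (1/2) * (Real.log (4*N) - Real.log (N+1)) := by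
      have := hlog_lt; nlinarith
    exact this.ne'
  have hfin := hD.div hLstar hLne
  have hR1ne : R1 ≠ 0 := hR1pos.ne'
  have hR2ne : R2 ≠ 0 := hR2pos.ne'
  have hprod : R1 * R2 = (4*N*pM)/((N*pM+1)*(N*pm+1)) := by
    rw [hR1_def, hR2_def]
    have h1 : pM + 1/N ≠ 0 := by positivity
    have h2 : pm + 1/N ≠ 0 := by positivity
    have h3 : N*pM + 1 ≠ 0 := by positivity
    have h4 : N*pm + 1 ≠ 0 := by positivity
    field_simp
    ring
  have hval1 : Real.log R1 + Real.log R2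
      = Real.log (4*N*pM) - Real.log ((N*pM+1)*(N*pm+1)) := by
    rw [← Real.log_mul hR1ne hR2ne, hprod,
      Real.log_div (by positivity) (by positivity)]
  have hfinal : ((1/2) * (Real.log R1 + Real.log R2)) / ((1/2) * (Real.log (4*N) - Real.log (N+1)))
      = (Real.log (4*N*pM) - Real.log ((N*pM+1)*(N*pm+1))) / (Real.log (4*N) - Real.log (N+1)) := by
    rw [hval1, mul_div_mul_left _ _ (by norm_num : (1/2:ℝ) ≠ 0)]
  rw [hfinal] at hfin
  exact hfin
end

section
/- If every component of the probability distribution p = (p_1, …, p_n) is strictly positive, then the Rényi complexity-entropy curve begins at the point (1, 0): the limit of H_α(p) as α tends to 0 from the right equals 1, and the limit of C_α(p) as α tends to 0 from the right equals 0. -/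
open Real Filter Topology

section helper
variable {n : ℕ}

lemma tendsto_rpow_at0 {c : ℝ} (hc : 0 < c) :
    Tendsto (fun α : ℝ => c ^ α) (𝓝 0) (𝓝 1) := by
  have := (Real.continuousAt_const_rpow (a := c) (b := (0:ℝ)) hc.ne').tendsto
  simpa using this

lemma tendsto_rpow_one_sub {c : ℝ} (hc : 0 < c) :
    Tendsto (fun α : ℝ => c ^ (1 - α)) (𝓝 0) (𝓝 c) := by
  have h1 : Tendsto (fun α : ℝ => (1:ℝ) - α) (𝓝 0) (𝓝 1) := by
    simpa [Pi.sub_def] using (continuous_const.sub continuous_id).tendsto (0:ℝ)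
  have := (Real.continuousAt_const_rpow (a := c) (b := (1:ℝ)) hc.ne').tendsto.comp h1
  simpa [Function.comp_def, Real.rpow_one] using this

end helper

/-- If every component of `p` is strictly positive, the Rényi complexity-entropy curve
begins at the point `(1, 0)` as `α → 0⁺`. -/
theorem renyi_curve_starts_at_one_zero (n : ℕ) (hn : 2 ≤ n) (p : Fin n → ℝ)
    (hp : ∀ i, 0 ≤ p i) (hsum : ∑ i, p i = 1)
    (hpos : ∀ i, 0 < p i) :
    Filter.Tendsto (fun α => renyiH n p α) (nhdsWithin 0 (Set.Ioi 0)) (nhds 1) ∧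
    Filter.Tendsto (fun α => renyiC n p α) (nhdsWithin 0 (Set.Ioi 0)) (nhds 0) := by
  have hn1 : (1:ℝ) < n := by exact_mod_cast lt_of_lt_of_le one_lt_two hn
  have hn0 : (0:ℝ) < n := lt_trans one_pos hn1
  have hlogn : (0:ℝ) < Real.log n := Real.log_pos hn1
  have hq : ∀ i : Fin n, (0:ℝ) < (p i + 1 / n) / 2 := by
    intro i; have := hpos i; positivity
  have hqsum : ∑ i, (p i + 1 / (n:ℝ)) / 2 = 1 := by
    rw [← Finset.sum_div, Finset.sum_add_distrib, hsum, Finset.sum_const,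
      Finset.card_univ, Fintype.card_fin]
    rw [nsmul_eq_mul]
    field_simp
    norm_num
  have hqsum' : ∑ i, (p i + ((n:ℝ))⁻¹) / 2 = 1 := by simpa [one_div] using hqsum
  -- the sums
  have t1 : Tendsto (fun α : ℝ => ∑ i, p i ^ α) (𝓝 0) (𝓝 (n:ℝ)) := by
    have h := tendsto_finset_sum (f := fun (i : Fin n) (α : ℝ) => p i ^ α)
      (Finset.univ) (fun i _ => tendsto_rpow_at0 (hpos i))
    simpa using h
  have t2 : Tendsto (fun α : ℝ => ∑ i, p i ^ α * ((p i + 1/(n:ℝ))/2) ^ (1-α)) (𝓝 0) (𝓝 1) := by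
    have h := tendsto_finset_sum
      (f := fun (i : Fin n) (α : ℝ) => p i ^ α * ((p i + 1/(n:ℝ))/2) ^ (1-α))
      (Finset.univ)
      (fun i _ => (tendsto_rpow_at0 (hpos i)).mul (tendsto_rpow_one_sub (hq i)))
    simpa [one_mul, one_div, hqsum'] using h
  have hnegα : Tendsto (fun α : ℝ => (n:ℝ) ^ (-α)) (𝓝 0) (𝓝 1) := by
    have hneg : Tendsto (fun α : ℝ => -α) (𝓝 (0:ℝ)) (𝓝 (0:ℝ)) := by
      simpa using (continuous_neg.tendsto (0:ℝ))
    simpa [Function.comp_def] using (tendsto_rpow_at0 hn0).comp hneg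
  have t3 : Tendsto (fun α : ℝ => ∑ i, (n:ℝ)^(-α) * ((p i + 1/(n:ℝ))/2) ^ (1-α)) (𝓝 0) (𝓝 1) := by
    have h := tendsto_finset_sum
      (f := fun (i : Fin n) (α : ℝ) => (n:ℝ)^(-α) * ((p i + 1/(n:ℝ))/2) ^ (1-α))
      (Finset.univ)
      (fun i _ => hnegα.mul (tendsto_rpow_one_sub (hq i)))
    simpa [one_mul, one_div, hqsum'] using h
  -- H
  have tcoeff : Tendsto (fun α : ℝ => (1:ℝ)/((1-α) * Real.log n)) (𝓝 0) (𝓝 (1/Real.log n)) := by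
    have hden : Tendsto (fun α : ℝ => (1-α) * Real.log n) (𝓝 0) (𝓝 (Real.log n)) := by
      have : ContinuousAt (fun α : ℝ => (1-α) * Real.log n) 0 :=
        ((continuous_const.sub continuous_id).mul continuous_const).continuousAt
      simpa using this.tendsto
    exact tendsto_const_nhds.div hden hlogn.ne'
  have tlog1 : Tendsto (fun α : ℝ => Real.log (∑ i, p i ^ α)) (𝓝 0) (𝓝 (Real.log n)) :=
    (Real.continuousAt_log hn0.ne').tendsto.comp t1
  have tH : Tendsto (fun α => renyiH n p α) (𝓝 0) (𝓝 1) := by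
    have h := tcoeff.mul tlog1
    have : (1/Real.log n) * Real.log n = 1 := by field_simp
    rw [this] at h
    exact h
  -- D
  have tcoeffD : Tendsto (fun α : ℝ => (1:ℝ)/(2*(α-1))) (𝓝 0) (𝓝 (-(1/2))) := by
    have hden : Tendsto (fun α : ℝ => 2*(α-1)) (𝓝 0) (𝓝 (-2)) := by
      have : ContinuousAt (fun α : ℝ => 2*(α-1)) 0 :=
        (continuous_const.mul (continuous_id.sub continuous_const)).continuousAt
      simpa using this.tendsto
    have h := Tendsto.div (tendsto_const_nhds : Tendsto (fun _ : ℝ => (1:ℝ)) (𝓝 0) (𝓝 1))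
      hden (by norm_num : (-2:ℝ) ≠ 0)
    have h2 : (1:ℝ)/(-2) = -(1/2) := by norm_num
    rwa [h2] at h
  have tD : Tendsto (fun α => renyiD n p α) (𝓝 0) (𝓝 0) := by
    have hl2 : Tendsto (fun α : ℝ => Real.log (∑ i, p i ^ α * ((p i + 1/(n:ℝ))/2) ^ (1-α)))
        (𝓝 0) (𝓝 0) := by
      have := (Real.continuousAt_log one_ne_zero).tendsto.comp t2
      simpa [Function.comp_def] using this
    have hl3 : Tendsto (fun α : ℝ => Real.log (∑ i, (n:ℝ)^(-α) * ((p i + 1/(n:ℝ))/2) ^ (1-α)))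
        (𝓝 0) (𝓝 0) := by
      have := (Real.continuousAt_log one_ne_zero).tendsto.comp t3
      simpa [Function.comp_def] using this
    have h := tcoeffD.mul (hl2.add hl3)
    simpa [renyiD] using h
  -- Dstar
  have hL0 : (0:ℝ) < ((n:ℝ)+1)/(2*n) := by positivity
  have hL1 : ((n:ℝ)+1)/(2*n) < 1 := by
    rw [div_lt_one (by positivity)]; linarith
  have targ : Tendsto (fun α : ℝ => ((((n:ℝ)+1)^(1-α) + (n:ℝ) - 1)/(n:ℝ)) *
      (((n:ℝ)+1)/(4*(n:ℝ)))^(1-α)) (𝓝 0) (𝓝 (((n:ℝ)+1)/(2*n))) := by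
    have ha : Tendsto (fun α : ℝ => (((n:ℝ)+1)^(1-α) + (n:ℝ) - 1)/(n:ℝ)) (𝓝 0) (𝓝 2) := by
      have h := ((tendsto_rpow_one_sub (by positivity : (0:ℝ) < (n:ℝ)+1)).add_const
        ((n:ℝ))).sub_const 1 |>.div_const (n:ℝ)
      have h2 : ((n:ℝ)+1 + n - 1)/n = 2 := by field_simp; ring
      rwa [h2] at h
    have hb : Tendsto (fun α : ℝ => (((n:ℝ)+1)/(4*(n:ℝ)))^(1-α)) (𝓝 0)
        (𝓝 (((n:ℝ)+1)/(4*n))) := tendsto_rpow_one_sub (by positivity)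
    have h := ha.mul hb
    have h2 : (2:ℝ) * (((n:ℝ)+1)/(4*n)) = ((n:ℝ)+1)/(2*n) := by field_simp; ring
    rwa [h2] at h
  have hdstar_ne : (-(1/2) * Real.log (((n:ℝ)+1)/(2*n))) ≠ 0 := by
    have := Real.log_neg hL0 hL1
    intro h
    nlinarith
  have tDstar : Tendsto (fun α => renyiDstar n α) (𝓝 0)
      (𝓝 (-(1/2) * Real.log (((n:ℝ)+1)/(2*n)))) := by
    have hlog := (Real.continuousAt_log hL0.ne').tendsto.comp targ
    have h := tcoeffD.mul hlog
    simpa [renyiDstar] using h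
  -- conclude
  constructor
  · exact tH.mono_left nhdsWithin_le_nhds
  · have h := (tD.mul tH).div tDstar hdstar_ne
    have : (0:ℝ) * 1 / (-(1/2) * Real.log (((n:ℝ)+1)/(2*n))) = 0 := by simp
    rw [this] at h
    exact (h.mono_left nhdsWithin_le_nhds : _)
end

section
/- Let p = (p_1, …, p_n) be a probability distribution with maximum component p_M satisfying 0 < p_M < 1 and minimum component p_m. Define h_f = −(ln p_M)/(ln n) and c_f = ((ln((n p_M + 1)(n p_m + 1)) − ln(4 n p_M))/(ln(4n) − ln(n + 1))) · ((ln p_M)/(ln n)) (these are the limits of H_α(p) and C_α(p) as α → ∞). Then the minimum component can be recovered from the curve's endpoint by p_m = (4 p_M/(n p_M + 1)) · ((n + 1)/(4n))^{c_f/h_f} − 1/n. -/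
open Real Filter Topology

/-- The minimum component `pm` is recovered from the endpoint `(h_f, c_f)` of the curve. -/
theorem renyi_endpoint_recovers_min (n : ℕ) (hn : 2 ≤ n) (p : Fin n → ℝ)
    (hp : ∀ i, 0 ≤ p i) (hsum : ∑ i, p i = 1)
    (pM pm : ℝ) (hpM_mem : ∃ i, p i = pM) (hpM_ub : ∀ i, p i ≤ pM)
    (hpM_pos : 0 < pM) (hpM_lt : pM < 1)
    (hpm_mem : ∃ i, p i = pm) (hpm_lb : ∀ i, pm ≤ p i)
    (hf cf : ℝ)
    (hhf : hf = -(Real.log pM) / Real.log n)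
    (hcf : cf = ((Real.log (((n : ℝ) * pM + 1) * ((n : ℝ) * pm + 1)) -
        Real.log (4 * (n : ℝ) * pM)) /
      (Real.log (4 * (n : ℝ)) - Real.log ((n : ℝ) + 1))) * (Real.log pM / Real.log n)) :
    pm = (4 * pM / ((n : ℝ) * pM + 1)) * (((n : ℝ) + 1) / (4 * (n : ℝ))) ^ (cf / hf) -
      1 / (n : ℝ) := by
  obtain ⟨im, him⟩ := hpm_mem
  have hpm0 : 0 ≤ pm := him ▸ hp im
  have hN : (2:ℝ) ≤ (n:ℝ) := by exact_mod_cast hn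
  have h1 : 0 < (n:ℝ) * pM + 1 := by nlinarith
  have h2 : 0 < (n:ℝ) * pm + 1 := by nlinarith
  have h3 : 0 < 4 * (n:ℝ) * pM := by nlinarith
  have h5 : 0 < (n:ℝ) + 1 := by linarith
  have hlogn : 0 < Real.log n := Real.log_pos (by linarith)
  have hlogpM : Real.log pM < 0 := Real.log_neg hpM_pos hpM_lt
  have hden : 0 < Real.log (4 * (n:ℝ)) - Real.log ((n:ℝ) + 1) :=
    sub_pos.mpr (Real.log_lt_log h5 (by linarith))
  have hx : (0:ℝ) < ((n:ℝ) + 1) / (4 * (n:ℝ)) := by positivity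
  have hlogx : Real.log (((n:ℝ) + 1) / (4 * (n:ℝ))) =
      Real.log ((n:ℝ) + 1) - Real.log (4 * (n:ℝ)) :=
    Real.log_div (by linarith) (by positivity)
  have hratio : cf / hf = (Real.log (4 * (n:ℝ) * pM) -
      Real.log (((n:ℝ) * pM + 1) * ((n:ℝ) * pm + 1))) /
      (Real.log (4 * (n:ℝ)) - Real.log ((n:ℝ) + 1)) := by
    have hL : Real.log pM ≠ 0 := ne_of_lt hlogpM
    have hLn : Real.log n ≠ 0 := ne_of_gt hlogn
    have h9 : Real.log pM / Real.log n / (-Real.log pM / Real.log n) = -1 := by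
      field_simp
    rw [hcf, hhf, mul_div_assoc, h9]
    ring
  have hexp : (((n:ℝ) + 1) / (4 * (n:ℝ))) ^ (cf / hf) =
      ((n:ℝ) * pM + 1) * ((n:ℝ) * pm + 1) / (4 * (n:ℝ) * pM) := by
    rw [Real.rpow_def_of_pos hx, hratio, hlogx]
    rw [mul_comm]
    have : (Real.log (4 * (n:ℝ) * pM) -
        Real.log (((n:ℝ) * pM + 1) * ((n:ℝ) * pm + 1))) /
        (Real.log (4 * (n:ℝ)) - Real.log ((n:ℝ) + 1)) *
        (Real.log ((n:ℝ) + 1) - Real.log (4 * (n:ℝ))) =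
        Real.log (((n:ℝ) * pM + 1) * ((n:ℝ) * pm + 1)) -
        Real.log (4 * (n:ℝ) * pM) := by
      field_simp
      ring
    rw [this, Real.exp_sub, Real.exp_log (by positivity), Real.exp_log h3]
  rw [hexp]
  have hn0 : (0:ℝ) < (n:ℝ) := by linarith
  field_simp
  ring
end

section
/- For every probability distribution p = (p_1, …, p_n) and every α > 0 with α ≠ 1, the Rényi statistical complexity satisfies 0 ≤ C_α(p) ≤ 1. -/
open Real Filter Topology

private lemma bern_ge {γ x : ℝ} (hγ : 1 ≤ γ) (hx : 0 ≤ x) :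
    1 + γ * (x - 1) ≤ x ^ γ := by
  have h := one_add_mul_self_le_rpow_one_add (s := x - 1) (by linarith) hγ
  have hx' : 1 + (x - 1) = x := by ring
  rwa [hx'] at h

private lemma bern_le {γ x : ℝ} (hγ0 : 0 ≤ γ) (hγ1 : γ ≤ 1) (hx : 0 ≤ x) :
    x ^ γ ≤ 1 + γ * (x - 1) := by
  have h := rpow_one_add_le_one_add_mul_self (s := x - 1) (by linarith) hγ0 hγ1
  have hx' : 1 + (x - 1) = x := by ring
  rwa [hx'] at h

private lemma bern_nonpos {γ x : ℝ} (hγ : γ ≤ 0) (hx : 0 < x) :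
    1 + γ * (x - 1) ≤ x ^ γ := by
  have h1 : γ * Real.log x + 1 ≤ Real.exp (γ * Real.log x) := Real.add_one_le_exp _
  have h2 : Real.log x ≤ x - 1 := Real.log_le_sub_one_of_pos hx
  have h3 : γ * (x - 1) ≤ γ * Real.log x := mul_le_mul_of_nonpos_left h2 hγ
  rw [Real.rpow_def_of_pos hx]
  rw [mul_comm γ (Real.log x)] at h1
  linarith

private lemma tmul_ge {γ a x : ℝ} (ha : 0 < a) (hx : 0 ≤ x)
    (h : 1 + γ * (x / a - 1) ≤ (x / a) ^ γ) :
    a + γ * (x - a) ≤ x ^ γ * a ^ (1 - γ) := by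
  have hdiv : (x / a) ^ γ = x ^ γ / a ^ γ := Real.div_rpow hx ha.le γ
  have haγ : (0:ℝ) < a ^ γ := Real.rpow_pos_of_pos ha γ
  have h1γ : a ^ (1 - γ) = a / a ^ γ := by
    rw [Real.rpow_sub ha, Real.rpow_one]
  rw [hdiv] at h
  have h2 := mul_le_mul_of_nonneg_left h ha.le
  have e1 : a * (1 + γ * (x / a - 1)) = a + γ * (x - a) := by
    field_simp
  have e2 : a * (x ^ γ / a ^ γ) = x ^ γ * a ^ (1 - γ) := by
    rw [h1γ]; ring
  rw [e1, e2] at h2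
  exact h2

private lemma tmul_le {γ a x : ℝ} (ha : 0 < a) (hx : 0 ≤ x)
    (h : (x / a) ^ γ ≤ 1 + γ * (x / a - 1)) :
    x ^ γ * a ^ (1 - γ) ≤ a + γ * (x - a) := by
  have hdiv : (x / a) ^ γ = x ^ γ / a ^ γ := Real.div_rpow hx ha.le γ
  have haγ : (0:ℝ) < a ^ γ := Real.rpow_pos_of_pos ha γ
  have h1γ : a ^ (1 - γ) = a / a ^ γ := by
    rw [Real.rpow_sub ha, Real.rpow_one]
  rw [hdiv] at h
  have h2 := mul_le_mul_of_nonneg_left h ha.le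
  have e1 : a * (1 + γ * (x / a - 1)) = a + γ * (x - a) := by
    field_simp
  have e2 : a * (x ^ γ / a ^ γ) = x ^ γ * a ^ (1 - γ) := by
    rw [h1γ]; ring
  rw [e1, e2] at h2
  exact h2

private lemma chord_le {β a b t : ℝ} (hβ : β ≤ 0) (ha : 0 < a) (hb : 0 < b)
    (ht0 : 0 ≤ t) (ht1 : t ≤ 1) :
    ((1 - t) * a + t * b) ^ β ≤ (1 - t) * a ^ β + t * b ^ β := by
  have hu0 : 0 < (1 - t) * a + t * b := by
    rcases eq_or_lt_of_le ht0 with h | h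
    · rw [← h]; simpa using ha
    · nlinarith [mul_pos h hb, mul_nonneg (by linarith : (0:ℝ) ≤ 1 - t) ha.le]
  set u : ℝ := (1 - t) * a + t * b with hu
  have h1 := bern_nonpos hβ (x := a / u) (div_pos ha hu0)
  have h2 := bern_nonpos hβ (x := b / u) (div_pos hb hu0)
  have huβ : (0:ℝ) < u ^ β := Real.rpow_pos_of_pos hu0 β
  have ea : (a / u) ^ β = a ^ β / u ^ β := Real.div_rpow ha.le hu0.le β
  have eb : (b / u) ^ β = b ^ β / u ^ β := Real.div_rpow hb.le hu0.le β
  rw [ea] at h1; rw [eb] at h2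
  have hc : (1 - t) * (1 + β * (a / u - 1)) + t * (1 + β * (b / u - 1)) = 1 := by
    have hne : u ≠ 0 := hu0.ne'
    field_simp
    rw [hu]; ring
  have h3 : 1 ≤ (1 - t) * (a ^ β / u ^ β) + t * (b ^ β / u ^ β) := by
    have k1 := mul_le_mul_of_nonneg_left h1 (by linarith : (0:ℝ) ≤ 1 - t)
    have k2 := mul_le_mul_of_nonneg_left h2 ht0
    linarith [hc ▸ (add_le_add k1 k2)]
  calc u ^ β = u ^ β * 1 := by ring
    _ ≤ u ^ β * ((1 - t) * (a ^ β / u ^ β) + t * (b ^ β / u ^ β)) :=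
        mul_le_mul_of_nonneg_left h3 huβ.le
    _ = (1 - t) * a ^ β + t * b ^ β := by field_simp

private lemma chord_ge {β a b t : ℝ} (hβ0 : 0 ≤ β) (hβ1 : β ≤ 1) (ha : 0 < a) (hb : 0 < b)
    (ht0 : 0 ≤ t) (ht1 : t ≤ 1) :
    (1 - t) * a ^ β + t * b ^ β ≤ ((1 - t) * a + t * b) ^ β := by
  have hu0 : 0 < (1 - t) * a + t * b := by
    rcases eq_or_lt_of_le ht0 with h | h
    · rw [← h]; simpa using ha
    · nlinarith [mul_pos h hb, mul_nonneg (by linarith : (0:ℝ) ≤ 1 - t) ha.le]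
  set u : ℝ := (1 - t) * a + t * b with hu
  have h1 := bern_le hβ0 hβ1 (x := a / u) (div_pos ha hu0).le
  have h2 := bern_le hβ0 hβ1 (x := b / u) (div_pos hb hu0).le
  have huβ : (0:ℝ) < u ^ β := Real.rpow_pos_of_pos hu0 β
  have ea : (a / u) ^ β = a ^ β / u ^ β := Real.div_rpow ha.le hu0.le β
  have eb : (b / u) ^ β = b ^ β / u ^ β := Real.div_rpow hb.le hu0.le β
  rw [ea] at h1; rw [eb] at h2
  have hc : (1 - t) * (1 + β * (a / u - 1)) + t * (1 + β * (b / u - 1)) = 1 := by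
    have hne : u ≠ 0 := hu0.ne'
    field_simp
    rw [hu]; ring
  have h3 : (1 - t) * (a ^ β / u ^ β) + t * (b ^ β / u ^ β) ≤ 1 := by
    have k1 := mul_le_mul_of_nonneg_left h1 (by linarith : (0:ℝ) ≤ 1 - t)
    have k2 := mul_le_mul_of_nonneg_left h2 ht0
    linarith [hc ▸ (add_le_add k1 k2)]
  calc (1 - t) * a ^ β + t * b ^ β
      = u ^ β * ((1 - t) * (a ^ β / u ^ β) + t * (b ^ β / u ^ β)) := by field_simp
    _ ≤ u ^ β * 1 := mul_le_mul_of_nonneg_left h3 huβ.le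
    _ = u ^ β := by ring

private lemma sum_comb {n : ℕ} (x y : Fin n → ℝ) (α : ℝ) :
    ∑ i, (x i + α * (y i - x i)) = (∑ i, x i) + α * ((∑ i, y i) - ∑ i, x i) := by
  rw [Finset.sum_add_distrib, ← Finset.mul_sum, Finset.sum_sub_distrib]


private lemma assembly {n : ℕ} {p : Fin n → ℝ} {α : ℝ}
    (hH0 : 0 ≤ renyiH n p α) (hH1 : renyiH n p α ≤ 1)
    (hD0 : 0 ≤ renyiD n p α) (hDle : renyiD n p α ≤ renyiDstar n α) :
    0 ≤ renyiC n p α ∧ renyiC n p α ≤ 1 := by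
  have hDs0 : 0 ≤ renyiDstar n α := le_trans hD0 hDle
  rcases eq_or_lt_of_le hDs0 with h0 | hpos
  · have hD : renyiD n p α = 0 := le_antisymm (h0 ▸ hDle) hD0
    have hC : renyiC n p α = 0 := by unfold renyiC; rw [hD, zero_mul, zero_div]
    rw [hC]; norm_num
  · constructor
    · exact div_nonneg (mul_nonneg hD0 hH0) hpos.le
    · show renyiD n p α * renyiH n p α / renyiDstar n α ≤ 1
      rw [div_le_one hpos]
      calc renyiD n p α * renyiH n p α ≤ renyiD n p α * 1 :=
            mul_le_mul_of_nonneg_left hH1 hD0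
        _ = renyiD n p α := mul_one _
        _ ≤ renyiDstar n α := hDle

set_option maxHeartbeats 1000000 in
/-- For every probability distribution `p` and every `α > 0`, `α ≠ 1`,
the Rényi statistical complexity satisfies `0 ≤ C_α(p) ≤ 1`. -/
theorem renyi_complexity_bounds (n : ℕ) (hn : 2 ≤ n) (p : Fin n → ℝ)
    (hp : ∀ i, 0 ≤ p i) (hsum : ∑ i, p i = 1) :
    ∀ α : ℝ, 0 < α → α ≠ 1 → 0 ≤ renyiC n p α ∧ renyiC n p α ≤ 1 := by
  intro α hα hα1
  have hN2 : (2:ℝ) ≤ (n:ℝ) := by exact_mod_cast hn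
  set N : ℝ := (n : ℝ) with hNdef
  have hN0 : (0:ℝ) < N := by linarith
  have hN1 : (1:ℝ) < N := by linarith
  have hlogN : 0 < Real.log N := Real.log_pos hN1
  have hc0 : (0:ℝ) < 1/N := by positivity
  set c : ℝ := 1 / N with hc
  have hNc : N * c = 1 := by rw [hc]; field_simp
  have hcard : (Finset.univ : Finset (Fin n)).card = n := by simp
  have hsumc : ∑ _i : Fin n, c = 1 := by
    rw [Finset.sum_const, hcard, nsmul_eq_mul, ← hNdef, hNc]
  have hple : ∀ i, p i ≤ 1 := by
    intro i
    calc p i ≤ ∑ j, p j := Finset.single_le_sum (fun j _ => hp j) (Finset.mem_univ i)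
      _ = 1 := hsum
  have hm0 : ∀ i, 0 < (p i + c)/2 := fun i =>
    div_pos (by linarith [hp i, hc0]) two_pos
  have hMsum : ∑ i, (p i + c)/2 = 1 := by
    have h : ∑ i, (p i + c)/2 = ((∑ i, p i) + (∑ _i : Fin n, c))/2 := by
      rw [← Finset.sum_add_distrib, ← Finset.sum_div]
    rw [h, hsum, hsumc]; norm_num
  have hsum_c : ∑ i, (c + α * (p i - c)) = 1 := by
    have h := sum_comb (n := n) (fun _ => c) p α
    rw [h, hsumc, hsum]; ring
  have hsum_m : ∑ i, ((p i + c)/2 + α * (p i - (p i + c)/2)) = 1 := by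
    have h := sum_comb (n := n) (fun i => (p i + c)/2) p α
    rw [h, hMsum, hsum]; ring
  have hsum_mc : ∑ i, ((p i + c)/2 + α * (c - (p i + c)/2)) = 1 := by
    have h := sum_comb (n := n) (fun i => (p i + c)/2) (fun _ => c) α
    rw [h, hMsum, hsumc]; ring
  set S : ℝ := ∑ i, p i ^ α with hSdef
  set A : ℝ := ∑ i, p i ^ α * ((p i + c)/2) ^ (1-α) with hAdef
  set B : ℝ := ∑ i, N ^ (-α) * ((p i + c)/2) ^ (1-α) with hBdef
  set Astar : ℝ := ((N+1)/(2*N)) ^ (1-α) with hAstardef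
  set Bstar : ℝ := N ^ (-α) * (((N+1)/(2*N)) ^ (1-α) + (N-1) * ((1/(2*N)) ^ (1-α))) with hBstardef
  have hb1 : (0:ℝ) < 1/(2*N) := div_pos one_pos (by linarith)
  have hb2 : (0:ℝ) < (N+1)/(2*N) := div_pos (by linarith) (by linarith)
  have hAstar_pos : 0 < Astar := Real.rpow_pos_of_pos hb2 _
  have hBstar_pos : 0 < Bstar := by
    apply mul_pos (Real.rpow_pos_of_pos hN0 _)
    have h1 : (0:ℝ) < ((N+1)/(2*N)) ^ (1-α) := Real.rpow_pos_of_pos hb2 _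
    have h2 : (0:ℝ) < (1/(2*N)) ^ (1-α) := Real.rpow_pos_of_pos hb1 _
    have h3 : 0 ≤ (N-1) * ((1/(2*N)) ^ (1-α)) := mul_nonneg (by linarith) h2.le
    linarith
  have hHeq : renyiH n p α = (1/((1-α) * Real.log N)) * Real.log S := by
    simp only [renyiH, hSdef, hNdef]
  have hDeq : renyiD n p α = (1/(2*(α-1))) * (Real.log A + Real.log B) := by
    simp only [renyiD, hAdef, hBdef, hc, hNdef]
  -- identity for Dstar
  have hN1p : (0:ℝ) < N + 1 := by linarith
  have h2b : (0:ℝ) < (2:ℝ) ^ (1-α) := Real.rpow_pos_of_pos two_pos _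
  have hNb : (0:ℝ) < N ^ (1-α) := Real.rpow_pos_of_pos hN0 _
  have es2N : ((N+1)/(2*N))^(1-α) = (N+1)^(1-α) / ((2:ℝ)^(1-α) * N^(1-α)) := by
    rw [Real.div_rpow hN1p.le (by linarith), Real.mul_rpow (by norm_num) hN0.le]
  have es4N : ((N+1)/(4*N))^(1-α)
      = (N+1)^(1-α) / ((2:ℝ)^(1-α) * (2:ℝ)^(1-α) * N^(1-α)) := by
    rw [Real.div_rpow hN1p.le (by linarith), Real.mul_rpow (by norm_num) hN0.le,
      show (4:ℝ) = 2*2 by norm_num, Real.mul_rpow (by norm_num) (by norm_num)]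
  have es12N : ((1:ℝ)/(2*N))^(1-α) = 1 / ((2:ℝ)^(1-α) * N^(1-α)) := by
    rw [Real.div_rpow (by norm_num) (by linarith), Real.one_rpow,
      Real.mul_rpow (by norm_num) hN0.le]
  have esNa : N^(-α) = N^(1-α) / N := by
    rw [show -α = (1-α) - 1 by ring, Real.rpow_sub hN0, Real.rpow_one]
  have hKid : (((N+1)^(1-α) + N - 1)/N) * ((N+1)/(4*N))^(1-α) = Astar * Bstar := by
    rw [hAstardef, hBstardef, es2N, es4N, es12N, esNa]
    have e1 : ((2:ℝ)^(1-α)) ≠ 0 := h2b.ne'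
    have e2 : (N^(1-α)) ≠ 0 := hNb.ne'
    have e3 : N ≠ 0 := hN0.ne'
    field_simp
    ring
  have hDseq : renyiDstar n α = (1/(2*(α-1))) * Real.log (Astar * Bstar) := by
    have h : renyiDstar n α
        = (1/(2*(α-1))) * Real.log ((((N+1)^(1-α) + N - 1)/N) * ((N+1)/(4*N))^(1-α)) := by
      simp only [renyiDstar, hNdef]
    rw [h, hKid]
  have ec : c ^ α = N ^ (-α) := by
    rw [hc, one_div, Real.inv_rpow hN0.le, ← Real.rpow_neg hN0.le]
  rcases lt_or_gt_of_ne hα1 with hlt | hgt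
  · -- α < 1
    have h1a : 0 < 1 - α := by linarith
    have hco : 1/(2*(α-1)) ≤ 0 := le_of_lt (div_neg_of_pos_of_neg one_pos (by linarith))
    have hS_ge1 : 1 ≤ S := by
      have h : ∑ i, p i ≤ ∑ i, p i ^ α := by
        apply Finset.sum_le_sum
        intro i _
        rcases eq_or_lt_of_le (hp i) with h0 | h0
        · rw [← h0, Real.zero_rpow (ne_of_gt hα)]
        · have h := Real.rpow_le_rpow_of_exponent_ge h0 (hple i) hlt.le
          rwa [Real.rpow_one] at h
      rw [hsum, ← hSdef] at h
      exact h
    have hS_leN : S ≤ N^(1-α) := by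
      have P1 : ∀ i, p i ^ α * c ^ (1-α) ≤ c + α * (p i - c) := fun i =>
        tmul_le hc0 (hp i) (bern_le hα.le hlt.le (div_nonneg (hp i) hc0.le))
      have h1 : S * c^(1-α) ≤ 1 := by
        calc S * c ^ (1-α) = ∑ i, p i ^ α * c ^ (1-α) := by rw [← Finset.sum_mul, ← hSdef]
          _ ≤ ∑ i, (c + α * (p i - c)) := Finset.sum_le_sum (fun i _ => P1 i)
          _ = 1 := hsum_c
      have hcb : c ^ (1-α) = (N ^ (1-α))⁻¹ := by rw [hc, one_div, Real.inv_rpow hN0.le]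
      rw [hcb, ← div_eq_mul_inv, div_le_one hNb] at h1
      exact h1
    have hSpos : 0 < S := lt_of_lt_of_le one_pos hS_ge1
    have hH0 : 0 ≤ renyiH n p α := by
      rw [hHeq]
      exact mul_nonneg (le_of_lt (div_pos one_pos (mul_pos h1a hlogN)))
        (Real.log_nonneg hS_ge1)
    have hH1 : renyiH n p α ≤ 1 := by
      rw [hHeq]
      have hlogS : Real.log S ≤ (1-α) * Real.log N := by
        have h := Real.log_le_log hSpos hS_leN
        rwa [Real.log_rpow hN0] at h
      have hd : 0 < (1-α) * Real.log N := mul_pos h1a hlogN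
      calc (1/((1-α)*Real.log N)) * Real.log S
          ≤ (1/((1-α)*Real.log N)) * ((1-α) * Real.log N) :=
            mul_le_mul_of_nonneg_left hlogS (le_of_lt (div_pos one_pos hd))
        _ = 1 := one_div_mul_cancel hd.ne'
    have P2 : ∀ i, p i ^ α * ((p i + c)/2) ^ (1-α)
        ≤ (p i + c)/2 + α * (p i - (p i + c)/2) := fun i =>
      tmul_le (hm0 i) (hp i) (bern_le hα.le hlt.le (div_nonneg (hp i) (hm0 i).le))
    have P3 : ∀ i, N ^ (-α) * ((p i + c)/2) ^ (1-α)
        ≤ (p i + c)/2 + α * (c - (p i + c)/2) := by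
      intro i
      have h := tmul_le (hm0 i) hc0.le (bern_le hα.le hlt.le (div_nonneg hc0.le (hm0 i).le))
      rwa [ec] at h
    have hA_le1 : A ≤ 1 := by
      calc A = ∑ i, p i ^ α * ((p i + c)/2)^(1-α) := hAdef
        _ ≤ ∑ i, ((p i + c)/2 + α * (p i - (p i + c)/2)) :=
            Finset.sum_le_sum (fun i _ => P2 i)
        _ = 1 := hsum_m
    have hB_le1 : B ≤ 1 := by
      calc B = ∑ i, N ^ (-α) * ((p i + c)/2)^(1-α) := hBdef
        _ ≤ ∑ i, ((p i + c)/2 + α * (c - (p i + c)/2)) :=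
            Finset.sum_le_sum (fun i _ => P3 i)
        _ = 1 := hsum_mc
    have P4 : ∀ i, p i * Astar ≤ p i ^ α * ((p i + c)/2) ^ (1-α) := by
      intro i
      rcases eq_or_lt_of_le (hp i) with h0 | h0
      · rw [← h0, Real.zero_rpow (ne_of_gt hα), zero_mul, zero_mul]
      · have e1 : p i ^ α * ((p i + c)/2) ^ (1-α)
            = p i * ((((p i + c)/2) / p i) ^ (1 - α)) := by
          have ep : p i ^ α = p i * (p i ^ (1 - α))⁻¹ := by
            have h := Real.rpow_add h0 1 (-(1 - α))
            rw [show (1:ℝ) + -(1-α) = α by ring] at h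
            rw [h, Real.rpow_one, Real.rpow_neg (hp i)]
          rw [ep, Real.div_rpow (hm0 i).le (hp i), div_eq_mul_inv]
          ring
        have hr : (N+1)/(2*N) ≤ ((p i + c)/2) / p i := by
          rw [div_le_div_iff₀ (by linarith) h0]
          have expand : (p i + c)/2 * (2*N) = N * p i + N * c := by ring
          rw [expand, hNc]
          have h1 := hple i
          have h2 : (N+1) * p i = N * p i + p i := by ring
          rw [h2]
          linarith
        have hr' : Astar ≤ (((p i + c)/2) / p i) ^ (1-α) := by
          rw [hAstardef]
          exact Real.rpow_le_rpow hb2.le hr h1a.le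
        rw [e1]
        exact mul_le_mul_of_nonneg_left hr' (hp i)
    have hA_ge : Astar ≤ A := by
      calc Astar = ∑ i, p i * Astar := by rw [← Finset.sum_mul, hsum, one_mul]
        _ ≤ ∑ i, p i ^ α * ((p i + c)/2)^(1-α) := Finset.sum_le_sum (fun i _ => P4 i)
        _ = A := by rw [← hAdef]
    have P5 : ∀ i, (1 - p i) * ((1/(2*N)) ^ (1-α)) + p i * (((N+1)/(2*N)) ^ (1-α))
        ≤ ((p i + c)/2) ^ (1-α) := by
      intro i
      have h := chord_ge (β := 1-α) h1a.le (by linarith) hb1 hb2 (hp i) (hple i)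
      have e : (1 - p i) * (1/(2*N)) + p i * ((N+1)/(2*N)) = (p i + c)/2 := by
        rw [hc]; field_simp; ring
      rwa [e] at h
    have hB_ge : Bstar ≤ B := by
      have hsplit : ∑ i, ((1 - p i) * ((1/(2*N))^(1-α)) + p i * (((N+1)/(2*N))^(1-α)))
          = (N-1) * ((1/(2*N))^(1-α)) + ((N+1)/(2*N))^(1-α) := by
        rw [Finset.sum_add_distrib, ← Finset.sum_mul, ← Finset.sum_mul,
          Finset.sum_sub_distrib, Finset.sum_const, hcard, nsmul_eq_mul,
          mul_one, hsum, ← hNdef]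
        ring
      have h1 : (N-1) * ((1/(2*N))^(1-α)) + ((N+1)/(2*N))^(1-α)
          ≤ ∑ i, ((p i + c)/2) ^ (1-α) := by
        rw [← hsplit]
        exact Finset.sum_le_sum (fun i _ => P5 i)
      calc Bstar
          = N^(-α) * (((N+1)/(2*N))^(1-α) + (N-1) * ((1/(2*N))^(1-α))) := hBstardef
        _ ≤ N^(-α) * ∑ i, ((p i + c)/2)^(1-α) := by
            apply mul_le_mul_of_nonneg_left _ (Real.rpow_pos_of_pos hN0 (-α)).le
            linarith [h1]
        _ = B := by rw [Finset.mul_sum, ← hBdef]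
    have hApos : 0 < A := lt_of_lt_of_le hAstar_pos hA_ge
    have hBpos : 0 < B := lt_of_lt_of_le hBstar_pos hB_ge
    have hD0 : 0 ≤ renyiD n p α := by
      rw [hDeq]
      have h1 : Real.log A + Real.log B ≤ 0 :=
        add_nonpos (Real.log_nonpos hApos.le hA_le1) (Real.log_nonpos hBpos.le hB_le1)
      calc (0:ℝ) ≤ (-(1/(2*(α-1)))) * (-(Real.log A + Real.log B)) :=
            mul_nonneg (neg_nonneg.mpr hco) (neg_nonneg.mpr h1)
        _ = 1/(2*(α-1)) * (Real.log A + Real.log B) := by ring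
    have hDle : renyiD n p α ≤ renyiDstar n α := by
      rw [hDeq, hDseq]
      have hlog : Real.log (Astar * Bstar) ≤ Real.log A + Real.log B := by
        rw [← Real.log_mul hApos.ne' hBpos.ne']
        exact Real.log_le_log (mul_pos hAstar_pos hBstar_pos)
          (mul_le_mul hA_ge hB_ge hBstar_pos.le hApos.le)
      exact mul_le_mul_of_nonpos_left hlog hco
    exact assembly hH0 hH1 hD0 hDle
  · -- α > 1
    have h1a : 1 - α < 0 := by linarith
    have ham1 : (0:ℝ) < α - 1 := by linarith
    have hco : 0 ≤ 1/(2*(α-1)) := le_of_lt (div_pos one_pos (by linarith))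
    -- S bounds
    have hS_le1 : S ≤ 1 := by
      rw [hSdef, ← hsum]
      apply Finset.sum_le_sum
      intro i _
      rcases eq_or_lt_of_le (hp i) with h0 | h0
      · rw [← h0, Real.zero_rpow (ne_of_gt hα)]
      · calc p i ^ α ≤ p i ^ (1:ℝ) :=
              Real.rpow_le_rpow_of_exponent_ge h0 (hple i) hgt.le
          _ = p i := Real.rpow_one _
    have hS_geN : N^(1-α) ≤ S := by
      have P1 : ∀ i, c + α * (p i - c) ≤ p i ^ α * c ^ (1-α) := fun i =>
        tmul_ge hc0 (hp i) (bern_ge hgt.le (div_nonneg (hp i) hc0.le))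
      have h1 : 1 ≤ S * c^(1-α) := by
        calc (1:ℝ) = ∑ i, (c + α * (p i - c)) := hsum_c.symm
          _ ≤ ∑ i, p i ^ α * c ^ (1-α) := Finset.sum_le_sum (fun i _ => P1 i)
          _ = S * c ^ (1-α) := by rw [← Finset.sum_mul, ← hSdef]
      have hcb : c ^ (1-α) = (N ^ (1-α))⁻¹ := by
        rw [hc, one_div, Real.inv_rpow hN0.le]
      rw [hcb, ← div_eq_mul_inv, le_div_iff₀ hNb] at h1
      linarith
    have hSpos : 0 < S := lt_of_lt_of_le hNb hS_geN
    -- H bounds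
    have hH0 : 0 ≤ renyiH n p α := by
      rw [hHeq]
      have h1 : Real.log S ≤ 0 := Real.log_nonpos hSpos.le hS_le1
      have h2 : 1 / ((1-α) * Real.log N) ≤ 0 :=
        le_of_lt (div_neg_of_pos_of_neg one_pos (mul_neg_of_neg_of_pos h1a hlogN))
      calc (0:ℝ) ≤ (-(1 / ((1-α) * Real.log N))) * (-(Real.log S)) :=
            mul_nonneg (neg_nonneg.mpr h2) (neg_nonneg.mpr h1)
        _ = 1 / ((1-α) * Real.log N) * Real.log S := by ring
    have hH1 : renyiH n p α ≤ 1 := by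
      rw [hHeq]
      have hlogS : (1-α) * Real.log N ≤ Real.log S := by
        have h := Real.log_le_log hNb hS_geN
        rwa [Real.log_rpow hN0] at h
      have hd : (1-α) * Real.log N < 0 := mul_neg_of_neg_of_pos h1a hlogN
      have hcoef : 1/((1-α)*Real.log N) ≤ 0 :=
        le_of_lt (div_neg_of_pos_of_neg one_pos hd)
      calc (1/((1-α)*Real.log N)) * Real.log S
          ≤ (1/((1-α)*Real.log N)) * ((1-α) * Real.log N) :=
            mul_le_mul_of_nonpos_left hlogS hcoef
        _ = 1 := one_div_mul_cancel hd.ne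
    -- A, B lower bounds
    have P2 : ∀ i, (p i + c)/2 + α * (p i - (p i + c)/2)
        ≤ p i ^ α * ((p i + c)/2) ^ (1-α) := fun i =>
      tmul_ge (hm0 i) (hp i) (bern_ge hgt.le (div_nonneg (hp i) (hm0 i).le))
    have P3 : ∀ i, (p i + c)/2 + α * (c - (p i + c)/2)
        ≤ N ^ (-α) * ((p i + c)/2) ^ (1-α) := by
      intro i
      have h := tmul_ge (hm0 i) hc0.le (bern_ge hgt.le (div_nonneg hc0.le (hm0 i).le))
      rwa [ec] at h
    have hA_ge1 : 1 ≤ A := by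
      calc (1:ℝ) = ∑ i, ((p i + c)/2 + α * (p i - (p i + c)/2)) := hsum_m.symm
        _ ≤ ∑ i, p i ^ α * ((p i + c)/2)^(1-α) := Finset.sum_le_sum (fun i _ => P2 i)
        _ = A := by rw [← hAdef]
    have hB_ge1 : 1 ≤ B := by
      calc (1:ℝ) = ∑ i, ((p i + c)/2 + α * (c - (p i + c)/2)) := hsum_mc.symm
        _ ≤ ∑ i, N ^ (-α) * ((p i + c)/2)^(1-α) := Finset.sum_le_sum (fun i _ => P3 i)
        _ = B := by rw [← hBdef]
    have hApos : 0 < A := lt_of_lt_of_le one_pos hA_ge1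
    have hBpos : 0 < B := lt_of_lt_of_le one_pos hB_ge1
    -- A ≤ Astar
    have P4 : ∀ i, p i ^ α * ((p i + c)/2) ^ (1-α) ≤ p i * Astar := by
      intro i
      rcases eq_or_lt_of_le (hp i) with h0 | h0
      · rw [← h0, Real.zero_rpow (ne_of_gt hα), zero_mul, zero_mul]
      · have e1 : p i ^ α * ((p i + c)/2) ^ (1-α)
            = p i * ((p i / ((p i + c)/2)) ^ (α - 1)) := by
          have ep : p i ^ α = p i * p i ^ (α - 1) := by
            have h := Real.rpow_add h0 1 (α - 1)
            rw [show (1:ℝ) + (α - 1) = α by ring] at h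
            rw [h, Real.rpow_one]
          have em : ((p i + c)/2) ^ (1-α) = (((p i + c)/2) ^ (α-1))⁻¹ := by
            rw [← Real.rpow_neg (hm0 i).le, show -(α-1) = 1 - α by ring]
          rw [ep, em, Real.div_rpow (hp i) (hm0 i).le, div_eq_mul_inv]
          ring
        have e2 : Astar = ((2*N/(N+1)) : ℝ) ^ (α - 1) := by
          rw [hAstardef, show (1-α) = -(α-1) by ring, Real.rpow_neg hb2.le,
            ← Real.inv_rpow hb2.le, inv_div]
        have hr : p i / ((p i + c)/2) ≤ 2*N/(N+1) := by
          rw [div_le_div_iff₀ (hm0 i) (by linarith)]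
          have expand : 2*N*((p i + c)/2) = N * p i + N * c := by ring
          rw [expand, hNc]
          have h1 := hple i
          have h2 : p i * (N+1) = N * p i + p i := by ring
          rw [h2]
          linarith
        have hr' : (p i / ((p i + c)/2)) ^ (α-1) ≤ (2*N/(N+1)) ^ (α-1) :=
          Real.rpow_le_rpow (div_nonneg (hp i) (hm0 i).le) hr (by linarith)
        rw [e1, e2]
        exact mul_le_mul_of_nonneg_left hr' (hp i)
    have hA_le : A ≤ Astar := by
      calc A = ∑ i, p i ^ α * ((p i + c)/2)^(1-α) := hAdef
        _ ≤ ∑ i, p i * Astar := Finset.sum_le_sum (fun i _ => P4 i)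
        _ = Astar := by rw [← Finset.sum_mul, hsum, one_mul]
    -- B ≤ Bstar
    have P5 : ∀ i, ((p i + c)/2) ^ (1-α)
        ≤ (1 - p i) * ((1/(2*N)) ^ (1-α)) + p i * (((N+1)/(2*N)) ^ (1-α)) := by
      intro i
      have h := chord_le (β := 1-α) (le_of_lt h1a) hb1 hb2 (hp i) (hple i)
      have e : (1 - p i) * (1/(2*N)) + p i * ((N+1)/(2*N)) = (p i + c)/2 := by
        rw [hc]; field_simp; ring
      rwa [e] at h
    have hB_le : B ≤ Bstar := by
      have h1 : ∑ i, ((p i + c)/2) ^ (1-α)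
          ≤ (N-1) * ((1/(2*N))^(1-α)) + ((N+1)/(2*N))^(1-α) := by
        calc ∑ i, ((p i + c)/2) ^ (1-α)
            ≤ ∑ i, ((1 - p i) * ((1/(2*N))^(1-α)) + p i * (((N+1)/(2*N))^(1-α))) :=
              Finset.sum_le_sum (fun i _ => P5 i)
          _ = (N-1) * ((1/(2*N))^(1-α)) + ((N+1)/(2*N))^(1-α) := by
              rw [Finset.sum_add_distrib, ← Finset.sum_mul, ← Finset.sum_mul,
                Finset.sum_sub_distrib, Finset.sum_const, hcard, nsmul_eq_mul,
                mul_one, hsum, ← hNdef]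
              ring
      calc B = ∑ i, N^(-α) * ((p i + c)/2)^(1-α) := hBdef
        _ = N^(-α) * ∑ i, ((p i + c)/2)^(1-α) := by rw [Finset.mul_sum]
        _ ≤ N^(-α) * ((N-1) * ((1/(2*N))^(1-α)) + ((N+1)/(2*N))^(1-α)) :=
            mul_le_mul_of_nonneg_left h1 (Real.rpow_pos_of_pos hN0 _).le
        _ = Bstar := by rw [hBstardef]; ring
    -- D bounds
    have hD0 : 0 ≤ renyiD n p α := by
      rw [hDeq]
      exact mul_nonneg hco
        (add_nonneg (Real.log_nonneg hA_ge1) (Real.log_nonneg hB_ge1))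
    have hDle : renyiD n p α ≤ renyiDstar n α := by
      rw [hDeq, hDseq]
      have hlog : Real.log A + Real.log B ≤ Real.log (Astar * Bstar) := by
        rw [← Real.log_mul hApos.ne' hBpos.ne']
        exact Real.log_le_log (mul_pos hApos hBpos)
          (mul_le_mul hA_le hB_le hBpos.le hAstar_pos.le)
      exact mul_le_mul_of_nonneg_left hlog hco
    exact assembly hH0 hH1 hD0 hDle
end
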